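/- arXiv:1305.5797 — 3 statements merged into one kernel-verified Lean document; each statement's English description precedes it below -/
import Mathlib

section
/- Let r > 0, let x and y be probability measures on (S, 𝓕) absolutely continuous with respect to λ, and let μ be a measure of total mass r on the space of measures on (S, 𝓕) such that μ-almost every point is a probability measure absolutely continuous with respect to λ and b(μ) = r·x. Then the infimum of d_K(μ, ν), taken over all measures ν of total mass r on the space of measures on (S, 𝓕) such that ν-almost every point is a probability measure absolutely continuous with respect to λ and b(ν) = r·y, equals r·δ_TV(x, y). -/
open MeasureTheory
open scoped NNReal ENNReal

/-- The total variation distance between two (finite) measures: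
`δ_TV(z₁,z₂) = sup_F (z₁(F) − z₂(F)) + sup_F (z₂(F) − z₁(F))`, `F` measurable. -/
noncomputable def tvDist {S : Type*} [MeasurableSpace S] (z₁ z₂ : Measure S) : ℝ :=
  sSup {d : ℝ | ∃ F : Set S, MeasurableSet F ∧ d = (z₁ F).toReal - (z₂ F).toReal} +
    sSup {d : ℝ | ∃ F : Set S, MeasurableSet F ∧ d = (z₂ F).toReal - (z₁ F).toReal}

/-- The barycenter of a measure `μ` on the space of measures: `b(μ)(F) = ∫ z(F) μ(dz)`. -/
noncomputable def bary {S : Type*} [MeasurableSpace S] (μ : Measure (Measure S)) : Measure S :=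
  μ.bind id

/-- The Kantorovich distance between two measures on the space of measures on `S`:
the infimum over all couplings `μ̃` of `∫ δ_TV(z₁,z₂) μ̃(dz₁,dz₂)`. -/
noncomputable def dK {S : Type*} [MeasurableSpace S] (μ ν : Measure (Measure S)) : ℝ≥0∞ :=
  ⨅ (μt : Measure (Measure S × Measure S))
    (_ : μt.map Prod.fst = μ ∧ μt.map Prod.snd = ν),
    ∫⁻ p, ENNReal.ofReal (tvDist p.1 p.2) ∂μt

section Aux

variable {S : Type*} [MeasurableSpace S]

private lemma tvDist_self (z : Measure S) : tvDist z z = 0 := by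
  have h : {d : ℝ | ∃ F : Set S, MeasurableSet F ∧ d = (z F).toReal - (z F).toReal} = {0} := by
    ext d
    simp only [Set.mem_setOf_eq, Set.mem_singleton_iff, sub_self]
    constructor
    · rintro ⟨F, -, rfl⟩; rfl
    · rintro rfl; exact ⟨∅, MeasurableSet.empty, rfl⟩
  rw [tvDist, h, csSup_singleton, add_zero]

private lemma tv_mem (z₁ z₂ : Measure S) {F : Set S} (hF : MeasurableSet F) :
    (z₁ F).toReal - (z₂ F).toReal ∈
      {d : ℝ | ∃ F : Set S, MeasurableSet F ∧ d = (z₁ F).toReal - (z₂ F).toReal} :=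
  ⟨F, hF, rfl⟩

private lemma tv_nonempty (z₁ z₂ : Measure S) :
    {d : ℝ | ∃ F : Set S, MeasurableSet F ∧ d = (z₁ F).toReal - (z₂ F).toReal}.Nonempty :=
  ⟨_, tv_mem z₁ z₂ MeasurableSet.empty⟩

private lemma tv_sSup_le {z₁ z₂ : Measure S} {c : ℝ}
    (hb : ∀ F : Set S, MeasurableSet F → (z₁ F).toReal - (z₂ F).toReal ≤ c) :
    sSup {d : ℝ | ∃ F : Set S, MeasurableSet F ∧ d = (z₁ F).toReal - (z₂ F).toReal} ≤ c :=
  csSup_le (tv_nonempty z₁ z₂) (by rintro d ⟨F, hF, rfl⟩; exact hb F hF)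

private lemma tv_bddAbove (z₁ z₂ : Measure S) [IsFiniteMeasure z₁] :
    BddAbove {d : ℝ | ∃ F : Set S, MeasurableSet F ∧ d = (z₁ F).toReal - (z₂ F).toReal} := by
  refine ⟨(z₁ Set.univ).toReal, ?_⟩
  rintro d ⟨F, hF, rfl⟩
  have h1 : (z₁ F).toReal ≤ (z₁ Set.univ).toReal :=
    ENNReal.toReal_mono (measure_ne_top _ _) (measure_mono (Set.subset_univ F))
  have h2 : 0 ≤ (z₂ F).toReal := ENNReal.toReal_nonneg
  linarith

private lemma tv_sSup_nonneg {z₁ z₂ : Measure S}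
    (hbdd : BddAbove {d : ℝ | ∃ F : Set S, MeasurableSet F ∧
      d = (z₁ F).toReal - (z₂ F).toReal}) :
    0 ≤ sSup {d : ℝ | ∃ F : Set S, MeasurableSet F ∧ d = (z₁ F).toReal - (z₂ F).toReal} := by
  refine le_csSup hbdd ?_
  have := tv_mem z₁ z₂ (MeasurableSet.empty (α := S))
  simpa using this

private lemma tv_sSup_eq {z₁ z₂ : Measure S} {A : Set S} (hA : MeasurableSet A)
    (hb : ∀ F : Set S, MeasurableSet F →
      (z₁ F).toReal - (z₂ F).toReal ≤ (z₁ A).toReal - (z₂ A).toReal) :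
    sSup {d : ℝ | ∃ F : Set S, MeasurableSet F ∧ d = (z₁ F).toReal - (z₂ F).toReal}
      = (z₁ A).toReal - (z₂ A).toReal :=
  IsGreatest.csSup_eq ⟨tv_mem z₁ z₂ hA, by rintro d ⟨F, hF, rfl⟩; exact hb F hF⟩

private lemma enn_sub_le_ofReal {a b : ℝ≥0∞} (ha : a ≠ ∞) :
    a - b ≤ ENNReal.ofReal (a.toReal - b.toReal) := by
  rcases le_total a b with hab | hab
  · simp [tsub_eq_zero_of_le hab]
  · rw [← ENNReal.toReal_sub_of_le hab ha,
      ENNReal.ofReal_toReal (ne_top_of_le_ne_top ha tsub_le_self)]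

private lemma enn_toReal_sub_le {a b c : ℝ≥0∞} (h : a ≤ b + c) (hb : b ≠ ∞) (hc : c ≠ ∞) :
    a.toReal - b.toReal ≤ c.toReal := by
  have h2 := ENNReal.toReal_mono (ENNReal.add_ne_top.mpr ⟨hb, hc⟩) h
  rw [ENNReal.toReal_add hb hc] at h2
  linarith

end Aux

/-- If `μ` has total mass `r`, is concentrated on probability measures `≪ λ`,
and has barycenter `r·x`, then the infimum of `d_K(μ, ν)` over all `ν` of total mass `r`,
concentrated on probability measures `≪ λ` with barycenter `r·y`, equals `r·δ_TV(x, y)`. -/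
theorem stmt_10 {S : Type*} [MetricSpace S] [CompleteSpace S]
    [TopologicalSpace.SeparableSpace S] [MeasurableSpace S] [BorelSpace S]
    (lam : Measure S) [SigmaFinite lam]
    (r : ℝ) (hr : 0 < r)
    (x y : Measure S)
    (hx : IsProbabilityMeasure x) (hxl : x ≪ lam)
    (hy : IsProbabilityMeasure y) (hyl : y ≪ lam)
    (μ : Measure (Measure S))
    (hμr : μ Set.univ = ENNReal.ofReal r)
    (hμae : ∀ᵐ z ∂μ, IsProbabilityMeasure z ∧ z ≪ lam)
    (hμb : bary μ = ENNReal.ofReal r • x) :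
    (⨅ (ν : Measure (Measure S))
        (_ : ν Set.univ = ENNReal.ofReal r ∧
          (∀ᵐ z ∂ν, IsProbabilityMeasure z ∧ z ≪ lam) ∧
          bary ν = ENNReal.ofReal r • y),
        dK μ ν) = ENNReal.ofReal (r * tvDist x y) := by
  haveI : SecondCountableTopology S := UniformSpace.secondCountable_of_separable S
  set r' : ℝ≥0∞ := ENNReal.ofReal r with hr'def
  obtain ⟨lam', hfin, hll', hl'l⟩ := MeasureTheory.exists_isFiniteMeasure_absolutelyContinuous lam
  haveI := hfin
  have hxl' : x ≪ lam' := hxl.trans hll'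
  have hyl' : y ≪ lam' := hyl.trans hll'
  set g : S → ℝ≥0∞ := x.rnDeriv lam' with hgdef
  set h : S → ℝ≥0∞ := y.rnDeriv lam' with hhdef
  have hg : Measurable g := Measure.measurable_rnDeriv x lam'
  have hh : Measurable h := Measure.measurable_rnDeriv y lam'
  have hxw : x = lam'.withDensity g := (Measure.withDensity_rnDeriv_eq x lam' hxl').symm
  have hyw : y = lam'.withDensity h := (Measure.withDensity_rnDeriv_eq y lam' hyl').symm
  have hxd : ∀ F : Set S, MeasurableSet F → x F = ∫⁻ s in F, g s ∂lam' :=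
    fun F _ => (Measure.setLIntegral_rnDeriv hxl' F).symm
  have hyd : ∀ F : Set S, MeasurableSet F → y F = ∫⁻ s in F, h s ∂lam' :=
    fun F _ => (Measure.setLIntegral_rnDeriv hyl' F).symm
  set A : Set S := {s | h s < g s} with hAdef
  set B : Set S := {s | g s < h s} with hBdef
  have hA : MeasurableSet A := measurableSet_lt hh hg
  have hB : MeasurableSet B := measurableSet_lt hg hh
  set C : Set S := (A ∪ B)ᶜ with hCdef
  have hC : MeasurableSet C := (hA.union hB).compl
  have hCeq : ∀ s ∈ C, g s = h s := by
    intro s hs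
    simp only [hCdef, Set.mem_compl_iff, Set.mem_union, hAdef, hBdef, Set.mem_setOf_eq,
      not_or, not_lt] at hs
    exact le_antisymm hs.1 hs.2
  have hABdisj : Disjoint A B := by
    rw [Set.disjoint_left]
    intro s hsA hsB
    exact lt_asymm (show h s < g s from hsA) (show g s < h s from hsB)
  have hACdisj : Disjoint A C := by
    rw [hCdef]
    exact disjoint_compl_right.mono_left Set.subset_union_left
  have hBCdisj : Disjoint B C := by
    rw [hCdef]
    exact disjoint_compl_right.mono_left Set.subset_union_right
  have hcover : (A ∪ B) ∪ C = Set.univ := by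
    rw [hCdef]; exact Set.union_compl_self _
  -- monotonicity comparisons
  have hmono1 : ∀ F : Set S, MeasurableSet F → (∀ s ∈ F, g s ≤ h s) → x F ≤ y F := by
    intro F hF hle
    rw [hxd F hF, hyd F hF]
    exact setLIntegral_mono hh hle
  have hmono2 : ∀ F : Set S, MeasurableSet F → (∀ s ∈ F, h s ≤ g s) → y F ≤ x F := by
    intro F hF hle
    rw [hxd F hF, hyd F hF]
    exact setLIntegral_mono hg hle
  have heqC : ∀ F : Set S, MeasurableSet F → (∀ s ∈ F, g s = h s) → x F = y F := by
    intro F hF he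
    rw [hxd F hF, hyd F hF]
    exact setLIntegral_congr_fun hF he
  have hfx : ∀ F : Set S, x F ≠ ∞ := fun F => measure_ne_top x F
  have hfy : ∀ F : Set S, y F ≠ ∞ := fun F => measure_ne_top y F
  have hyAxA : y A ≤ x A := hmono2 A hA fun s hs => le_of_lt hs
  have hxByB : x B ≤ y B := hmono1 B hB fun s hs => le_of_lt hs
  have k1 : ∀ F : Set S, MeasurableSet F → x F + y A ≤ x A + y F := by
    intro F hF
    have d1 : x (F \ A) ≤ y (F \ A) := hmono1 _ (hF.diff hA) fun s hs => not_lt.mp hs.2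
    have d2 : y (A \ F) ≤ x (A \ F) := hmono2 _ (hA.diff hF) fun s hs => le_of_lt hs.1
    have e1 : x F = x (F ∩ A) + x (F \ A) := (measure_inter_add_diff F hA).symm
    have e2 : y A = y (A ∩ F) + y (A \ F) := (measure_inter_add_diff A hF).symm
    have e3 : x A = x (A ∩ F) + x (A \ F) := (measure_inter_add_diff A hF).symm
    have e4 : y F = y (F ∩ A) + y (F \ A) := (measure_inter_add_diff F hA).symm
    rw [e1, e2, e3, e4, Set.inter_comm A F]
    calc x (F ∩ A) + x (F \ A) + (y (F ∩ A) + y (A \ F))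
        ≤ x (F ∩ A) + y (F \ A) + (y (F ∩ A) + x (A \ F)) := by
          exact add_le_add (add_le_add le_rfl d1) (add_le_add le_rfl d2)
      _ = x (F ∩ A) + x (A \ F) + (y (F ∩ A) + y (F \ A)) := by ring
  have k2 : ∀ F : Set S, MeasurableSet F → y F + x B ≤ y B + x F := by
    intro F hF
    have d1 : y (F \ B) ≤ x (F \ B) := hmono2 _ (hF.diff hB) fun s hs => not_lt.mp hs.2
    have d2 : x (B \ F) ≤ y (B \ F) := hmono1 _ (hB.diff hF) fun s hs => le_of_lt hs.1
    have e1 : y F = y (F ∩ B) + y (F \ B) := (measure_inter_add_diff F hB).symm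
    have e2 : x B = x (B ∩ F) + x (B \ F) := (measure_inter_add_diff B hF).symm
    have e3 : y B = y (B ∩ F) + y (B \ F) := (measure_inter_add_diff B hF).symm
    have e4 : x F = x (F ∩ B) + x (F \ B) := (measure_inter_add_diff F hB).symm
    rw [e1, e2, e3, e4, Set.inter_comm B F]
    calc y (F ∩ B) + y (F \ B) + (x (F ∩ B) + x (B \ F))
        ≤ y (F ∩ B) + x (F \ B) + (x (F ∩ B) + y (B \ F)) := by
          exact add_le_add (add_le_add le_rfl d1) (add_le_add le_rfl d2)
      _ = y (F ∩ B) + y (B \ F) + (x (F ∩ B) + x (F \ B)) := by ring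
  have k1R : ∀ F : Set S, MeasurableSet F →
      (x F).toReal - (y F).toReal ≤ (x A).toReal - (y A).toReal := by
    intro F hF
    have h2 := ENNReal.toReal_mono (ENNReal.add_ne_top.mpr ⟨hfx A, hfy F⟩) (k1 F hF)
    rw [ENNReal.toReal_add (hfx F) (hfy A), ENNReal.toReal_add (hfx A) (hfy F)] at h2
    linarith
  have k2R : ∀ F : Set S, MeasurableSet F →
      (y F).toReal - (x F).toReal ≤ (y B).toReal - (x B).toReal := by
    intro F hF
    have h2 := ENNReal.toReal_mono (ENNReal.add_ne_top.mpr ⟨hfy B, hfx F⟩) (k2 F hF)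
    rw [ENNReal.toReal_add (hfy F) (hfx B), ENNReal.toReal_add (hfy B) (hfx F)] at h2
    linarith
  have htv : tvDist x y = ((x A).toReal - (y A).toReal) + ((y B).toReal - (x B).toReal) := by
    rw [tvDist, tv_sSup_eq hA k1R, tv_sSup_eq hB k2R]
  -- mass balance
  have hux : x A + x B + x C = 1 := by
    rw [← measure_union hABdisj hB, ← measure_union (by
      rw [Set.disjoint_union_left]; exact ⟨hACdisj, hBCdisj⟩) hC, hcover, measure_univ]
  have huy : y A + y B + y C = 1 := by
    rw [← measure_union hABdisj hB, ← measure_union (by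
      rw [Set.disjoint_union_left]; exact ⟨hACdisj, hBCdisj⟩) hC, hcover, measure_univ]
  have hCxy : x C = y C := heqC C hC hCeq
  have hABreal : (x A).toReal - (y A).toReal = (y B).toReal - (x B).toReal := by
    have hx1 : (x A).toReal + (x B).toReal + (x C).toReal = 1 := by
      have h2 := congrArg ENNReal.toReal hux
      rwa [ENNReal.toReal_add (ENNReal.add_ne_top.mpr ⟨hfx A, hfx B⟩) (hfx C),
        ENNReal.toReal_add (hfx A) (hfx B), ENNReal.toReal_one] at h2
    have hy1 : (y A).toReal + (y B).toReal + (y C).toReal = 1 := by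
      have h2 := congrArg ENNReal.toReal huy
      rwa [ENNReal.toReal_add (ENNReal.add_ne_top.mpr ⟨hfy A, hfy B⟩) (hfy C),
        ENNReal.toReal_add (hfy A) (hfy B), ENNReal.toReal_one] at h2
    have hc := congrArg ENNReal.toReal hCxy
    linarith
  set dA : ℝ≥0∞ := x A - y A with hdAdef
  set dB : ℝ≥0∞ := y B - x B with hdBdef
  have hdAne : dA ≠ ∞ := ne_top_of_le_ne_top (hfx A) tsub_le_self
  have hdBne : dB ≠ ∞ := ne_top_of_le_ne_top (hfy B) tsub_le_self
  have hdAtoReal : dA.toReal = (x A).toReal - (y A).toReal :=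
    ENNReal.toReal_sub_of_le hyAxA (hfx A)
  have hdBtoReal : dB.toReal = (y B).toReal - (x B).toReal :=
    ENNReal.toReal_sub_of_le hxByB (hfy B)
  have hdAB : dA = dB :=
    (ENNReal.toReal_eq_toReal_iff' hdAne hdBne).mp (by rw [hdAtoReal, hdBtoReal]; exact hABreal)
  have htarget : ENNReal.ofReal (r * tvDist x y) = r' * (dA + dB) := by
    rw [htv, ENNReal.ofReal_mul hr.le, ← hdAtoReal, ← hdBtoReal,
      ← ENNReal.toReal_add hdAne hdBne,
      ENNReal.ofReal_toReal (ENNReal.add_ne_top.mpr ⟨hdAne, hdBne⟩)]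
  -- lower bound
  have hlow : ∀ ν : Measure (Measure S),
      (ν Set.univ = r' ∧ (∀ᵐ z ∂ν, IsProbabilityMeasure z ∧ z ≪ lam) ∧ bary ν = r' • y) →
      r' * (dA + dB) ≤ dK μ ν := by
    rintro ν ⟨-, hν2, hν3⟩
    show r' * (dA + dB) ≤ ⨅ (μt : Measure (Measure S × Measure S))
      (_ : μt.map Prod.fst = μ ∧ μt.map Prod.snd = ν),
      ∫⁻ p, ENNReal.ofReal (tvDist p.1 p.2) ∂μt
    refine le_iInf₂ fun μt hm => ?_
    obtain ⟨hm1, hm2⟩ := hm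
    have hp1 : ∀ᵐ p ∂μt, IsProbabilityMeasure p.1 := by
      have h1 : ∀ᵐ z ∂(μt.map Prod.fst), IsProbabilityMeasure z ∧ z ≪ lam := by
        rw [hm1]; exact hμae
      exact (ae_of_ae_map measurable_fst.aemeasurable h1).mono fun p hp => hp.1
    have hp2 : ∀ᵐ p ∂μt, IsProbabilityMeasure p.2 := by
      have h1 : ∀ᵐ z ∂(μt.map Prod.snd), IsProbabilityMeasure z ∧ z ≪ lam := by
        rw [hm2]; exact hν2
      exact (ae_of_ae_map measurable_snd.aemeasurable h1).mono fun p hp => hp.1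
    have hifst : ∀ F : Set S, MeasurableSet F → ∫⁻ (p : Measure S × Measure S), p.1 F ∂μt = r' * x F := by
      intro F hF
      rw [← lintegral_map (Measure.measurable_coe hF) measurable_fst, hm1]
      rw [show (∫⁻ z, z F ∂μ) = bary μ F from by
        rw [bary, Measure.bind_apply hF measurable_id.aemeasurable]; rfl]
      rw [hμb, Measure.smul_apply, smul_eq_mul]
    have hisnd : ∀ F : Set S, MeasurableSet F → ∫⁻ (p : Measure S × Measure S), p.2 F ∂μt = r' * y F := by
      intro F hF
      rw [← lintegral_map (Measure.measurable_coe hF) measurable_snd, hm2]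
      rw [show (∫⁻ z, z F ∂ν) = bary ν F from by
        rw [bary, Measure.bind_apply hF measurable_id.aemeasurable]; rfl]
      rw [hν3, Measure.smul_apply, smul_eq_mul]
    have hm1meas : Measurable fun p : Measure S × Measure S => p.1 A - p.2 A :=
      ((Measure.measurable_coe hA).comp measurable_fst).sub
        ((Measure.measurable_coe hA).comp measurable_snd)
    have hl1 : r' * dA ≤ ∫⁻ (p : Measure S × Measure S), (p.1 A - p.2 A) ∂μt := by
      refine le_trans ?_ (lintegral_sub_le (fun p : Measure S × Measure S => p.2 A) (fun p : Measure S × Measure S => p.1 A)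
        ((Measure.measurable_coe hA).comp measurable_snd))
      rw [hifst A hA, hisnd A hA]
      refine ENNReal.le_sub_of_add_le_right (by
        exact ENNReal.mul_ne_top ENNReal.ofReal_ne_top (hfy A)) ?_
      rw [← mul_add, hdAdef, tsub_add_cancel_of_le hyAxA]
    have hl2 : r' * dB ≤ ∫⁻ (p : Measure S × Measure S), (p.2 B - p.1 B) ∂μt := by
      refine le_trans ?_ (lintegral_sub_le (fun p : Measure S × Measure S => p.1 B) (fun p : Measure S × Measure S => p.2 B)
        ((Measure.measurable_coe hB).comp measurable_fst))
      rw [hisnd B hB, hifst B hB]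
      refine ENNReal.le_sub_of_add_le_right (by
        exact ENNReal.mul_ne_top ENNReal.ofReal_ne_top (hfx B)) ?_
      rw [← mul_add, hdBdef, tsub_add_cancel_of_le hxByB]
    have hptw : ∀ᵐ p ∂μt,
        (p.1 A - p.2 A) + (p.2 B - p.1 B) ≤ ENNReal.ofReal (tvDist p.1 p.2) := by
      filter_upwards [hp1, hp2] with p hq1 hq2
      haveI := hq1; haveI := hq2
      have hbdd1 := tv_bddAbove p.1 p.2
      have hbdd2 := tv_bddAbove p.2 p.1
      have h1 : p.1 A - p.2 A ≤ ENNReal.ofReal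
          (sSup {d : ℝ | ∃ F : Set S, MeasurableSet F ∧
            d = (p.1 F).toReal - (p.2 F).toReal}) :=
        (enn_sub_le_ofReal (measure_ne_top _ _)).trans
          (ENNReal.ofReal_le_ofReal (le_csSup hbdd1 (tv_mem _ _ hA)))
      have h2 : p.2 B - p.1 B ≤ ENNReal.ofReal
          (sSup {d : ℝ | ∃ F : Set S, MeasurableSet F ∧
            d = (p.2 F).toReal - (p.1 F).toReal}) :=
        (enn_sub_le_ofReal (measure_ne_top _ _)).trans
          (ENNReal.ofReal_le_ofReal (le_csSup hbdd2 (tv_mem _ _ hB)))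
      calc (p.1 A - p.2 A) + (p.2 B - p.1 B)
          ≤ ENNReal.ofReal (sSup {d : ℝ | ∃ F : Set S, MeasurableSet F ∧
              d = (p.1 F).toReal - (p.2 F).toReal}) +
            ENNReal.ofReal (sSup {d : ℝ | ∃ F : Set S, MeasurableSet F ∧
              d = (p.2 F).toReal - (p.1 F).toReal}) := add_le_add h1 h2
        _ = ENNReal.ofReal (tvDist p.1 p.2) := by
            rw [tvDist, ENNReal.ofReal_add (tv_sSup_nonneg hbdd1) (tv_sSup_nonneg hbdd2)]
    calc r' * (dA + dB) = r' * dA + r' * dB := by rw [mul_add]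
      _ ≤ ∫⁻ (p : Measure S × Measure S), (p.1 A - p.2 A) ∂μt + ∫⁻ (p : Measure S × Measure S), (p.2 B - p.1 B) ∂μt := add_le_add hl1 hl2
      _ = ∫⁻ (p : Measure S × Measure S), ((p.1 A - p.2 A) + (p.2 B - p.1 B)) ∂μt := (lintegral_add_left hm1meas _).symm
      _ ≤ ∫⁻ p, ENNReal.ofReal (tvDist p.1 p.2) ∂μt := lintegral_mono_ae hptw
  by_cases hdB0 : dB = 0
  · -- degenerate case : x = y
    have hdA0 : dA = 0 := hdAB.trans hdB0
    have hxAyA : x A = y A := le_antisymm (tsub_eq_zero_iff_le.mp hdA0) hyAxA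
    have hlamA : lam' A = 0 := by
      have hzero : ∫⁻ s in A, (g s - h s) ∂lam' = 0 := by
        rw [lintegral_sub hh (by rw [← hyd A hA]; exact hfy A)
          ((ae_restrict_iff' hA).mpr (Filter.Eventually.of_forall fun s hs => le_of_lt hs)),
          ← hxd A hA, ← hyd A hA, hxAyA, tsub_self]
      have h0 : ∀ᵐ s ∂(lam'.restrict A), g s - h s = 0 :=
        (lintegral_eq_zero_iff (hg.sub hh)).mp hzero
      have hsub : A ⊆ {s | ¬ (g s - h s = 0)} := by
        intro s hs
        simp only [Set.mem_setOf_eq, tsub_eq_zero_iff_le, not_le]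
        exact hs
      refine le_antisymm ?_ zero_le
      calc lam' A = lam'.restrict A A := (Measure.restrict_apply_self _ _).symm
        _ ≤ lam'.restrict A {s | ¬ (g s - h s = 0)} := measure_mono hsub
        _ = 0 := ae_iff.mp h0
    have hxByB' : x B = y B := le_antisymm hxByB (tsub_eq_zero_iff_le.mp hdB0)
    have hlamB : lam' B = 0 := by
      have hzero : ∫⁻ s in B, (h s - g s) ∂lam' = 0 := by
        rw [lintegral_sub hg (by rw [← hxd B hB]; exact hfx B)
          ((ae_restrict_iff' hB).mpr (Filter.Eventually.of_forall fun s hs => le_of_lt hs)),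
          ← hxd B hB, ← hyd B hB, hxByB', tsub_self]
      have h0 : ∀ᵐ s ∂(lam'.restrict B), h s - g s = 0 :=
        (lintegral_eq_zero_iff (hh.sub hg)).mp hzero
      have hsub : B ⊆ {s | ¬ (h s - g s = 0)} := by
        intro s hs
        simp only [Set.mem_setOf_eq, tsub_eq_zero_iff_le, not_le]
        exact hs
      refine le_antisymm ?_ zero_le
      calc lam' B = lam'.restrict B B := (Measure.restrict_apply_self _ _).symm
        _ ≤ lam'.restrict B {s | ¬ (h s - g s = 0)} := measure_mono hsub
        _ = 0 := ae_iff.mp h0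
    have hxy : x = y := by
      ext F hF
      have hFC : F \ C ⊆ A ∪ B := by
        intro s hs
        by_contra hcon
        exact hs.2 hcon
      have hABnull : lam' (A ∪ B) = 0 := measure_union_null hlamA hlamB
      have hxF : x (F \ C) = 0 := hxl' (measure_mono_null hFC hABnull)
      have hyF : y (F \ C) = 0 := hyl' (measure_mono_null hFC hABnull)
      calc x F = x (F ∩ C) + x (F \ C) := (measure_inter_add_diff F hC).symm
        _ = y (F ∩ C) + y (F \ C) := by
            rw [hxF, hyF, heqC (F ∩ C) (hF.inter hC) fun s hs => hCeq s hs.2]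
        _ = y F := measure_inter_add_diff F hC
    have htv0 : tvDist x y = 0 := by rw [hxy]; exact tvDist_self y
    rw [htv0, mul_zero, ENNReal.ofReal_zero]
    refine le_antisymm ?_ zero_le
    have hadm : μ Set.univ = r' ∧ (∀ᵐ z ∂μ, IsProbabilityMeasure z ∧ z ≪ lam) ∧
        bary μ = r' • y := ⟨hμr, hμae, by rw [← hxy]; exact hμb⟩
    refine le_trans (iInf₂_le μ hadm) ?_
    have hpair : Measurable fun z : Measure S => (z, z) := measurable_id.prodMk measurable_id
    have hμt1 : (μ.map fun z : Measure S => (z, z)).map Prod.fst = μ := by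
      rw [Measure.map_map measurable_fst hpair]
      exact Measure.map_id
    have hμt2 : (μ.map fun z : Measure S => (z, z)).map Prod.snd = μ := by
      rw [Measure.map_map measurable_snd hpair]
      exact Measure.map_id
    refine le_trans (show dK μ μ ≤ ∫⁻ p, ENNReal.ofReal (tvDist p.1 p.2)
      ∂(μ.map fun z : Measure S => (z, z)) from iInf₂_le _ ⟨hμt1, hμt2⟩) ?_
    refine le_trans (lintegral_map_le _ _) ?_
    simp [tvDist_self]
  · -- main case
    have hdBne' : dB ≠ 0 := hdB0
    -- the transported kernel machinery
    set φ : S → ℝ≥0∞ := A.indicator (fun s => 1 - h s / g s) with hφdef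
    have hφm : Measurable φ := (measurable_const.sub (hh.div hg)).indicator hA
    have hφ1 : ∀ s, φ s ≤ 1 := by
      intro s
      by_cases hs : s ∈ A
      · rw [hφdef, Set.indicator_of_mem hs]; exact tsub_le_self
      · rw [hφdef, Set.indicator_of_notMem hs]; exact zero_le_one
    set ψ : S → ℝ≥0∞ := B.indicator (fun s => h s - g s) with hψdef
    have hψm : Measurable ψ := (hh.sub hg).indicator hB
    set β : Measure S := lam'.withDensity ψ with hβdef
    have hβF : ∀ F : Set S, MeasurableSet F → β F = ∫⁻ s in F ∩ B, (h s - g s) ∂lam' := by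
      intro F hF
      rw [hβdef, withDensity_apply _ hF, hψdef,
        lintegral_indicator hB, Measure.restrict_restrict hB, Set.inter_comm B F]
    have hβuniv : β Set.univ = dB := by
      rw [hβF Set.univ MeasurableSet.univ, Set.univ_inter,
        lintegral_sub hg (by rw [← hxd B hB]; exact hfx B)
          ((ae_restrict_iff' hB).mpr (Filter.Eventually.of_forall fun s hs => le_of_lt hs)),
        ← hxd B hB, ← hyd B hB]
    have hβle : ∀ F : Set S, β F ≤ dB :=
      fun F => le_trans (measure_mono (Set.subset_univ F)) (le_of_eq hβuniv)
    have hβac : β ≪ lam' := withDensity_absolutelyContinuous lam' ψ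
    set Tk : Measure S → Measure S := fun z => if z Set.univ ≤ 1 then z else 0 with hTkdef
    have hTkm : Measurable Tk := Measurable.ite
      (measurableSet_le (Measure.measurable_coe MeasurableSet.univ) measurable_const)
      measurable_id measurable_const
    set κ : ProbabilityTheory.Kernel (Measure S) S := ⟨Tk, hTkm⟩ with hκdef
    haveI hκfin : ProbabilityTheory.IsFiniteKernel κ := by
      refine ⟨⟨1, ENNReal.one_lt_top, fun z => ?_⟩⟩
      show Tk z Set.univ ≤ 1
      rw [hTkdef]
      by_cases hz : z Set.univ ≤ 1
      · simpa [hz] using hz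
      · simp [hz]
    set η : ProbabilityTheory.Kernel (Measure S) S :=
      ProbabilityTheory.Kernel.const (Measure S) lam' with hηdef
    have hρjm : Measurable fun p : Measure S × S =>
        ProbabilityTheory.Kernel.rnDeriv κ η p.1 p.2 :=
      ProbabilityTheory.Kernel.measurable_rnDeriv κ η
    have hρz : ∀ z : Measure S, IsProbabilityMeasure z →
        (fun s => ProbabilityTheory.Kernel.rnDeriv κ η z s) =ᵐ[lam'] z.rnDeriv lam' := by
      intro z hz
      have h1 : κ z = z := by
        show Tk z = z
        rw [hTkdef]
        simp [hz.measure_univ]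
      have h2 : η z = lam' := ProbabilityTheory.Kernel.const_apply lam' z
      have h3 := ProbabilityTheory.Kernel.rnDeriv_eq_rnDeriv_measure (κ := κ) (η := η) (a := z)
      rw [h1, h2] at h3
      exact h3
    set m : Measure S → ℝ≥0∞ :=
      fun z => ∫⁻ s, φ s * ProbabilityTheory.Kernel.rnDeriv κ η z s ∂lam' with hmdef
    have hmm : Measurable m := ((hφm.comp measurable_snd).mul hρjm).lintegral_prod_right'
    set T : Measure S → Measure S := fun z =>
      lam'.withDensity (fun s => (1 - φ s) * ProbabilityTheory.Kernel.rnDeriv κ η z s) +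
        (m z / dB) • β with hTdef
    have hTF : ∀ (z : Measure S) (F : Set S), MeasurableSet F →
        T z F = (∫⁻ s in F, (1 - φ s) * ProbabilityTheory.Kernel.rnDeriv κ η z s ∂lam') +
          (m z / dB) * β F := by
      intro z F hF
      rw [hTdef]
      simp only [Measure.add_apply, Measure.smul_apply, smul_eq_mul]
      rw [withDensity_apply _ hF]
    have hTm : Measurable T := by
      apply Measure.measurable_of_measurable_coe
      intro F hF
      have h1 : Measurable fun z : Measure S =>
          ∫⁻ s, (1 - φ s) * ProbabilityTheory.Kernel.rnDeriv κ η z s ∂(lam'.restrict F) :=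
        (((measurable_const.sub hφm).comp measurable_snd).mul hρjm).lintegral_prod_right'
      have h2 : Measurable fun z : Measure S => (m z / dB) * β F :=
        (hmm.div measurable_const).mul_const _
      have h3 : (fun z => T z F) = fun z =>
          (∫⁻ s, (1 - φ s) * ProbabilityTheory.Kernel.rnDeriv κ η z s ∂(lam'.restrict F)) +
            (m z / dB) * β F := funext fun z => hTF z F hF
      rw [h3]
      exact h1.add h2
    have hgood : ∀ᵐ z ∂μ, IsProbabilityMeasure z ∧ z ≪ lam' :=
      hμae.mono fun z hz => ⟨hz.1, hz.2.trans hll'⟩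
    have hTz : ∀ z : Measure S, IsProbabilityMeasure z → z ≪ lam' →
        T z = z.withDensity (fun s => 1 - φ s) + ((∫⁻ s, φ s ∂z) / dB) • β := by
      intro z hz1 hz2
      have hden : lam'.withDensity
          (fun s => (1 - φ s) * ProbabilityTheory.Kernel.rnDeriv κ η z s) =
          z.withDensity fun s => 1 - φ s := by
        have e1 : (fun s => (1 - φ s) * ProbabilityTheory.Kernel.rnDeriv κ η z s)
            =ᵐ[lam'] (fun s => z.rnDeriv lam' s * (1 - φ s)) :=
          (hρz z hz1).mono fun s hs => by
            have hs' : ProbabilityTheory.Kernel.rnDeriv κ η z s = z.rnDeriv lam' s := hs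
            show (1 - φ s) * ProbabilityTheory.Kernel.rnDeriv κ η z s =
              z.rnDeriv lam' s * (1 - φ s)
            rw [hs', mul_comm]
        rw [withDensity_congr_ae e1,
          show (fun s => z.rnDeriv lam' s * (1 - φ s)) =
            (z.rnDeriv lam' * fun s => 1 - φ s) from rfl,
          withDensity_mul lam' (Measure.measurable_rnDeriv z lam') (show Measurable fun s => 1 - φ s from measurable_const.sub hφm),
          Measure.withDensity_rnDeriv_eq z lam' hz2]
      have hmz : m z = ∫⁻ s, φ s ∂z := by
        simp only [hmdef]
        have e1 : (fun s => φ s * ProbabilityTheory.Kernel.rnDeriv κ η z s)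
            =ᵐ[lam'] (fun s => (z.rnDeriv lam' * φ) s) :=
          (hρz z hz1).mono fun s hs => by
            have hs' : ProbabilityTheory.Kernel.rnDeriv κ η z s = z.rnDeriv lam' s := hs
            show φ s * ProbabilityTheory.Kernel.rnDeriv κ η z s = (z.rnDeriv lam' * φ) s
            simp only [Pi.mul_apply]
            rw [hs', mul_comm]
        rw [lintegral_congr_ae e1,
          ← lintegral_withDensity_eq_lintegral_mul lam' (Measure.measurable_rnDeriv z lam') hφm,
          Measure.withDensity_rnDeriv_eq z lam' hz2]
      rw [hTdef]
      simp only
      rw [hden, hmz]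
    have hTuniv : ∀ z : Measure S, IsProbabilityMeasure z → z ≪ lam' →
        T z Set.univ = 1 := by
      intro z hz1 hz2
      rw [hTz z hz1 hz2]
      simp only [Measure.add_apply, Measure.smul_apply, smul_eq_mul]
      rw [withDensity_apply _ MeasurableSet.univ, Measure.restrict_univ, hβuniv,
        ENNReal.div_mul_cancel hdBne' hdBne, ← lintegral_add_left (show Measurable fun s => 1 - φ s from measurable_const.sub hφm)]
      calc ∫⁻ s, ((1 - φ s) + φ s) ∂z = ∫⁻ _, 1 ∂z :=
            lintegral_congr fun s => by rw [tsub_add_cancel_of_le (hφ1 s)]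
        _ = 1 := by rw [lintegral_one, measure_univ]
    have hTll' : ∀ z : Measure S, T z ≪ lam' := by
      intro z
      rw [hTdef]
      exact Measure.AbsolutelyContinuous.add_left (withDensity_absolutelyContinuous _ _)
        (Measure.smul_absolutelyContinuous.trans hβac)
    have htvz : ∀ z : Measure S, IsProbabilityMeasure z → z ≪ lam' →
        ENNReal.ofReal (tvDist z (T z)) ≤ 2 * ∫⁻ s, φ s ∂z := by
      intro z hz1 hz2
      haveI := hz1
      haveI hTp : IsProbabilityMeasure (T z) := ⟨hTuniv z hz1 hz2⟩
      have hmz1 : (∫⁻ s, φ s ∂z) ≤ 1 := by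
        calc ∫⁻ s, φ s ∂z ≤ ∫⁻ _, 1 ∂z := lintegral_mono hφ1
          _ = 1 := by rw [lintegral_one, measure_univ]
      have hmzne : (∫⁻ s, φ s ∂z) ≠ ∞ := ne_top_of_le_ne_top ENNReal.one_ne_top hmz1
      have key1 : ∀ F : Set S, MeasurableSet F → z F ≤ T z F + ∫⁻ s, φ s ∂z := by
        intro F hF
        have h1 : z F = ∫⁻ s in F, (1 - φ s) ∂z + ∫⁻ s in F, φ s ∂z := by
          rw [← lintegral_add_left (show Measurable fun s => 1 - φ s from measurable_const.sub hφm)]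
          calc z F = ∫⁻ _ in F, 1 ∂z := (setLIntegral_one F).symm
            _ = ∫⁻ s in F, ((1 - φ s) + φ s) ∂z :=
                lintegral_congr fun s => by rw [tsub_add_cancel_of_le (hφ1 s)]
        have h2 : ∫⁻ s in F, (1 - φ s) ∂z ≤ T z F := by
          rw [hTz z hz1 hz2]
          simp only [Measure.add_apply]
          exact le_trans (le_of_eq (withDensity_apply _ hF).symm) le_self_add
        have h3 : ∫⁻ s in F, φ s ∂z ≤ ∫⁻ s, φ s ∂z := setLIntegral_le_lintegral F φ
        rw [h1]
        exact add_le_add h2 h3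
      have key2 : ∀ F : Set S, MeasurableSet F → T z F ≤ z F + ∫⁻ s, φ s ∂z := by
        intro F hF
        rw [hTz z hz1 hz2]
        simp only [Measure.add_apply, Measure.smul_apply, smul_eq_mul]
        rw [withDensity_apply _ hF]
        refine add_le_add ?_ ?_
        · calc ∫⁻ s in F, (1 - φ s) ∂z ≤ ∫⁻ _ in F, 1 ∂z :=
              setLIntegral_mono measurable_const fun s _ => tsub_le_self
            _ = z F := setLIntegral_one F
        · calc (∫⁻ s, φ s ∂z) / dB * β F ≤ (∫⁻ s, φ s ∂z) / dB * dB :=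
              mul_le_mul_right (hβle F) _
            _ = ∫⁻ s, φ s ∂z := ENNReal.div_mul_cancel hdBne' hdBne
      have hs1 : sSup {d : ℝ | ∃ F : Set S, MeasurableSet F ∧
          d = (z F).toReal - (T z F).toReal} ≤ (∫⁻ s, φ s ∂z).toReal :=
        tv_sSup_le fun F hF => enn_toReal_sub_le (key1 F hF) (measure_ne_top _ _) hmzne
      have hs2 : sSup {d : ℝ | ∃ F : Set S, MeasurableSet F ∧
          d = (T z F).toReal - (z F).toReal} ≤ (∫⁻ s, φ s ∂z).toReal :=
        tv_sSup_le fun F hF => enn_toReal_sub_le (key2 F hF) (measure_ne_top _ _) hmzne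
      calc ENNReal.ofReal (tvDist z (T z))
          ≤ ENNReal.ofReal ((∫⁻ s, φ s ∂z).toReal + (∫⁻ s, φ s ∂z).toReal) :=
            ENNReal.ofReal_le_ofReal (by rw [tvDist]; exact add_le_add hs1 hs2)
        _ = (∫⁻ s, φ s ∂z) + (∫⁻ s, φ s ∂z) := by
            rw [ENNReal.ofReal_add ENNReal.toReal_nonneg ENNReal.toReal_nonneg,
              ENNReal.ofReal_toReal hmzne]
        _ = 2 * ∫⁻ s, φ s ∂z := (two_mul _).symm
    -- ∫ φ dx = dA
    have hgae : ∀ᵐ s ∂lam', g s ≠ ∞ := Measure.rnDeriv_ne_top x lam'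
    have hg0A : ∀ s ∈ A, g s ≠ 0 := by
      intro s hs h0
      rw [hAdef] at hs
      simp only [Set.mem_setOf_eq, h0] at hs
      exact (not_lt.mpr zero_le) hs
    have hdivle : ∀ s ∈ A, h s / g s ≤ 1 := by
      intro s hs
      exact ENNReal.div_le_of_le_mul (by rw [one_mul]; exact le_of_lt hs)
    have hgφ : (fun s => (g * φ) s) =ᵐ[lam'] A.indicator (fun s => g s - h s) := by
      filter_upwards [hgae] with s hgs
      simp only [Pi.mul_apply]
      by_cases hs : s ∈ A
      · rw [hφdef, Set.indicator_of_mem hs, Set.indicator_of_mem hs]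
        have hmul : g s * (h s / g s) = h s := by
          rw [mul_comm, ENNReal.div_mul_cancel (hg0A s hs) hgs]
        have hadd : g s * (1 - h s / g s) + h s = g s := by
          nth_rewrite 2 [← hmul]
          rw [← mul_add, tsub_add_cancel_of_le (hdivle s hs), mul_one]
        exact ENNReal.eq_sub_of_add_eq (ne_top_of_le_ne_top hgs (le_of_lt hs)) hadd
      · rw [hφdef, Set.indicator_of_notMem hs, Set.indicator_of_notMem hs, mul_zero]
    have hφx : ∫⁻ s, φ s ∂x = dA := by
      rw [hxw, lintegral_withDensity_eq_lintegral_mul lam' hg hφm,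
        lintegral_congr_ae hgφ, lintegral_indicator hA,
        lintegral_sub hh (by rw [← hyd A hA]; exact hfy A)
          ((ae_restrict_iff' hA).mpr (Filter.Eventually.of_forall fun s hs => le_of_lt hs)),
        ← hxd A hA, ← hyd A hA]
    -- the integral of m over μ
    have hintφ : ∫⁻ z, ∫⁻ s, φ s ∂z ∂μ = r' * dB := by
      have hbind := Measure.lintegral_bind (m := μ) (μ := id) (f := φ) measurable_id.aemeasurable hφm.aemeasurable
      simp only [id] at hbind
      rw [← hbind, show μ.bind id = bary μ from rfl, hμb, lintegral_smul_measure, hφx, hdAB, smul_eq_mul]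
    -- the coupling and the target measure
    set ν₀ : Measure (Measure S) := μ.map T with hν₀def
    have hpair : Measurable fun z : Measure S => (z, T z) := measurable_id.prodMk hTm
    set μt : Measure (Measure S × Measure S) := μ.map (fun z => (z, T z)) with hμtdef
    have hmarg1 : μt.map Prod.fst = μ := by
      rw [hμtdef, Measure.map_map measurable_fst hpair]
      exact Measure.map_id
    have hmarg2 : μt.map Prod.snd = ν₀ := by
      rw [hμtdef, hν₀def, Measure.map_map measurable_snd hpair]
      rfl
    have hP1 : ν₀ Set.univ = r' := by
      rw [hν₀def, Measure.map_apply hTm MeasurableSet.univ, Set.preimage_univ, hμr]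
    -- barycenter of ν₀
    have hP3 : bary ν₀ = r' • y := by
      ext F hF
      have hb1 : bary ν₀ F = ∫⁻ w, w F ∂ν₀ := by
        rw [bary, Measure.bind_apply hF measurable_id.aemeasurable]
        rfl
      have hb2 : ∫⁻ w, w F ∂ν₀ = ∫⁻ z, T z F ∂μ := by
        rw [hν₀def, lintegral_map (Measure.measurable_coe hF) hTm]
      have hb3 : ∫⁻ z, T z F ∂μ = ∫⁻ z, ((∫⁻ s, F.indicator (fun t => 1 - φ t) s ∂z) +
          (∫⁻ s, φ s ∂z) * (β F / dB)) ∂μ := by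
        apply lintegral_congr_ae
        filter_upwards [hgood] with z hz
        rw [hTz z hz.1 hz.2]
        simp only [Measure.add_apply, Measure.smul_apply, smul_eq_mul]
        rw [withDensity_apply _ hF, ← lintegral_indicator hF]
        congr 1
        rw [ENNReal.div_eq_inv_mul, ENNReal.div_eq_inv_mul]
        ring
      have hmeas1 : Measurable fun z : Measure S =>
          ∫⁻ s, F.indicator (fun t => 1 - φ t) s ∂z :=
        Measure.measurable_lintegral ((measurable_const.sub hφm).indicator hF)
      have ht1 : ∫⁻ z, (∫⁻ s, F.indicator (fun t => 1 - φ t) s ∂z) ∂μ =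
          r' * ∫⁻ s in F, (1 - φ s) ∂x := by
        have hbind := Measure.lintegral_bind (m := μ) (μ := id)
          (f := F.indicator (fun t => 1 - φ t)) measurable_id.aemeasurable
          ((measurable_const.sub hφm).indicator hF).aemeasurable
        simp only [id] at hbind
        rw [← hbind, show μ.bind id = bary μ from rfl, hμb, lintegral_smul_measure,
          lintegral_indicator hF, smul_eq_mul]
      have ht2 : ∫⁻ z, (∫⁻ s, φ s ∂z) * (β F / dB) ∂μ = r' * β F := by
        rw [lintegral_mul_const _ (Measure.measurable_lintegral hφm), hintφ,
          ENNReal.div_eq_inv_mul]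
        calc r' * dB * (dB⁻¹ * β F) = r' * ((dB * dB⁻¹) * β F) := by ring
          _ = r' * β F := by rw [ENNReal.mul_inv_cancel hdBne' hdBne, one_mul]
      -- key pointwise identity
      have hWae : (fun s => (g * fun t => 1 - φ t) s) =ᵐ[lam']
          (fun s => if s ∈ A then h s else g s) := by
        filter_upwards [hgae] with s hgs
        simp only [Pi.mul_apply]
        by_cases hs : s ∈ A
        · rw [if_pos hs, hφdef, Set.indicator_of_mem hs,
            ENNReal.sub_sub_cancel ENNReal.one_ne_top (hdivle s hs), mul_comm,
            ENNReal.div_mul_cancel (hg0A s hs) hgs]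
        · rw [if_neg hs, hφdef, Set.indicator_of_notMem hs, tsub_zero, mul_one]
      set W : S → ℝ≥0∞ := fun s => if s ∈ A then h s else g s with hWdef
      have h1F : ∫⁻ s in F, (1 - φ s) ∂x = ∫⁻ s in F, W s ∂lam' := by
        rw [hxw, restrict_withDensity hF,
          lintegral_withDensity_eq_lintegral_mul _ hg (show Measurable fun s => 1 - φ s from measurable_const.sub hφm)]
        exact lintegral_congr_ae (ae_restrict_of_ae hWae)
      have hdecomp : ∀ ξ : S → ℝ≥0∞, ∫⁻ s in F, ξ s ∂lam'
          = ∫⁻ s in F ∩ A, ξ s ∂lam' +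
            (∫⁻ s in F ∩ B, ξ s ∂lam' + ∫⁻ s in F ∩ C, ξ s ∂lam') := by
        intro ξ
        have hFeq : F = (F ∩ A) ∪ ((F ∩ B) ∪ (F ∩ C)) := by
          rw [← Set.inter_union_distrib_left, ← Set.inter_union_distrib_left,
            ← Set.union_assoc, hcover, Set.inter_univ]
        rw [← lintegral_union (hF.inter hC)
            (hBCdisj.mono Set.inter_subset_right Set.inter_subset_right),
          ← lintegral_union ((hF.inter hB).union (hF.inter hC)) (by
            rw [Set.disjoint_union_right]
            exact ⟨hABdisj.mono Set.inter_subset_right Set.inter_subset_right,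
              hACdisj.mono Set.inter_subset_right Set.inter_subset_right⟩),
          ← hFeq]
      have eW1 : ∫⁻ s in F ∩ A, W s ∂lam' = y (F ∩ A) := by
        rw [setLIntegral_congr_fun (hF.inter hA)
          (fun s hs => by
            simp only [hWdef]; exact if_pos hs.2)]
        exact (hyd _ (hF.inter hA)).symm
      have eW2 : ∫⁻ s in F ∩ B, W s ∂lam' = ∫⁻ s in F ∩ B, g s ∂lam' :=
        setLIntegral_congr_fun (hF.inter hB)
          (fun s hs => by
            simp only [hWdef]
            exact if_neg fun hsA =>
              lt_asymm (show g s < h s from hs.2) (show h s < g s from hsA))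
      have eW3 : ∫⁻ s in F ∩ C, W s ∂lam' = y (F ∩ C) := by
        rw [setLIntegral_congr_fun (hF.inter hC) (fun s hs => by
          simp only [hWdef]
          rw [if_neg (fun hsA => (hACdisj.ne_of_mem hsA hs.2) rfl), hCeq s hs.2])]
        exact (hyd _ (hF.inter hC)).symm
      have hgB : ∫⁻ s in F ∩ B, g s ∂lam' + ∫⁻ s in F ∩ B, (h s - g s) ∂lam' = y (F ∩ B) := by
        rw [← lintegral_add_left hg]
        rw [setLIntegral_congr_fun (hF.inter hB) (fun s hs =>
          add_tsub_cancel_of_le (le_of_lt hs.2))]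
        exact (hyd _ (hF.inter hB)).symm
      have hyF : y F = y (F ∩ A) + (y (F ∩ B) + y (F ∩ C)) := by
        rw [hyd F hF, hdecomp h, ← hyd _ (hF.inter hA), ← hyd _ (hF.inter hB),
          ← hyd _ (hF.inter hC)]
      have hkey : ∫⁻ s in F, (1 - φ s) ∂x + β F = y F := by
        rw [h1F, hdecomp W, eW1, eW2, eW3, hβF F hF, hyF]
        calc y (F ∩ A) + (∫⁻ s in F ∩ B, g s ∂lam' + y (F ∩ C)) +
              ∫⁻ s in F ∩ B, (h s - g s) ∂lam'
            = y (F ∩ A) + ((∫⁻ s in F ∩ B, g s ∂lam' +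
                ∫⁻ s in F ∩ B, (h s - g s) ∂lam') + y (F ∩ C)) := by ring
          _ = y (F ∩ A) + (y (F ∩ B) + y (F ∩ C)) := by rw [hgB]
      rw [hb1, hb2, hb3, lintegral_add_left hmeas1, ht1, ht2, Measure.smul_apply,
        smul_eq_mul, ← mul_add, hkey]
    -- a.e. properties of ν₀
    have hMm : Measurable fun w : Measure S =>
        ∫⁻ s, ProbabilityTheory.Kernel.rnDeriv κ η w s ∂lam' := hρjm.lintegral_prod_right'
    set 𝒜 : Set (Measure S) := {w | w Set.univ = 1 ∧
      ∫⁻ s, ProbabilityTheory.Kernel.rnDeriv κ η w s ∂lam' = 1} with h𝒜def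
    have h𝒜m : MeasurableSet 𝒜 := by
      have h1 : MeasurableSet {w : Measure S | w Set.univ = 1} :=
        (Measure.measurable_coe MeasurableSet.univ) (measurableSet_singleton 1)
      have h2 : MeasurableSet {w : Measure S |
          ∫⁻ s, ProbabilityTheory.Kernel.rnDeriv κ η w s ∂lam' = 1} :=
        hMm (measurableSet_singleton 1)
      exact h1.inter h2
    have h𝒜good : ∀ w ∈ 𝒜, IsProbabilityMeasure w ∧ w ≪ lam := by
      rintro w ⟨hw1, hw2⟩
      haveI hwp : IsProbabilityMeasure w := ⟨hw1⟩
      have hint : ∫⁻ s, w.rnDeriv lam' s ∂lam' = 1 := by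
        rw [← lintegral_congr_ae (hρz w hwp)]
        exact hw2
      have hdec := Measure.singularPart_add_rnDeriv w lam'
      have hwd : lam'.withDensity (w.rnDeriv lam') Set.univ = 1 := by
        rw [withDensity_apply _ MeasurableSet.univ, Measure.restrict_univ, hint]
      have huniv : w.singularPart lam' Set.univ + 1 = 1 := by
        have h2 := congrArg (fun m : Measure S => m Set.univ) hdec
        simp only [Measure.add_apply] at h2
        rw [hwd, hw1] at h2
        exact h2
      have hsing0 : w.singularPart lam' Set.univ = 0 := by
        have h2 : 1 + w.singularPart lam' Set.univ = 1 + 0 := by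
          rw [add_comm, huniv, add_zero]
        exact (ENNReal.add_right_inj ENNReal.one_ne_top).mp h2
      have hwl' : w ≪ lam' :=
        (Measure.singularPart_eq_zero w lam').mp (Measure.measure_univ_eq_zero.mp hsing0)
      exact ⟨hwp, hwl'.trans hl'l⟩
    have hT𝒜 : ∀ᵐ z ∂μ, T z ∈ 𝒜 := by
      filter_upwards [hgood] with z hz
      haveI hTp : IsProbabilityMeasure (T z) := ⟨hTuniv z hz.1 hz.2⟩
      refine ⟨hTuniv z hz.1 hz.2, ?_⟩
      rw [lintegral_congr_ae (hρz (T z) hTp), Measure.lintegral_rnDeriv (hTll' z)]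
      exact hTuniv z hz.1 hz.2
    have hP2 : ∀ᵐ w ∂ν₀, IsProbabilityMeasure w ∧ w ≪ lam := by
      have h0 : ν₀ 𝒜ᶜ = 0 := by
        rw [hν₀def, Measure.map_apply hTm h𝒜m.compl]
        exact ae_iff.mp hT𝒜
      have h𝒜ae : ∀ᵐ w ∂ν₀, w ∈ 𝒜 := by
        rw [ae_iff]
        exact h0
      exact h𝒜ae.mono fun w hw => h𝒜good w hw
    -- the upper bound
    have hup : dK μ ν₀ ≤ r' * (dA + dB) := by
      refine le_trans (show dK μ ν₀ ≤ ∫⁻ p, ENNReal.ofReal (tvDist p.1 p.2) ∂μt from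
        iInf₂_le μt ⟨hmarg1, hmarg2⟩) ?_
      refine le_trans (show _ ≤ ∫⁻ z, ENNReal.ofReal (tvDist z (T z)) ∂μ from by
        rw [hμtdef]
        exact lintegral_map_le _ _) ?_
      refine le_trans (lintegral_mono_ae (hgood.mono fun z hz => htvz z hz.1 hz.2)) ?_
      rw [lintegral_const_mul 2 (Measure.measurable_lintegral hφm), hintφ, hdAB]
      ring_nf
      exact le_refl _
    rw [htarget]
    refine le_antisymm ?_ ?_
    · exact le_trans (iInf₂_le ν₀ ⟨hP1, hP2, hP3⟩) hup
    · exact le_iInf₂ hlow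
end

section
/- Let n ≥ 1 and let k₁, …, k_n be density kernels with rectangular supports F₁ × G₁, …, F_n × G_n, and suppose there are numbers κ_m ≥ 1 with k_m(s₁,t₁)k_m(s₂,t₂) ≤ κ_m² k_m(s₂,t₁)k_m(s₁,t₂) for all s₁, s₂ ∈ F_m, t₁, t₂ ∈ G_m, for each 1 ≤ m ≤ n. Define K_m(s, E) = ∫_E k_m(s,t) λ(dt), and recursively K^{n,n} = K_n and K^{m−1,n}(s, E) = ∫_S k_{m−1}(s,t) K^{m,n}(t, E) λ(dt) for m = n, n−1, …, 2, and set Kⁿ = K^{1,n}. Suppose Kⁿ(s, S) > 0 for all s ∈ F₁. Then for all s₁, s₂ ∈ F₁ and all E ∈ 𝓕, |Kⁿ(s₁, E)/Kⁿ(s₁, G_n) − Kⁿ(s₂, E)/Kⁿ(s₂, G_n)| ≤ ∏_{m=1}^n (κ_m − 1)/(κ_m + 1). -/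
open MeasureTheory
open scoped NNReal ENNReal

/-- Composition of a finite list of density kernels against the base measure `lam`,
restricted to a set `E` in the last coordinate:
`compKer lam [k₁, …, k_n] s E = ∫ k₁(s,t₁) ⋯ ∫ k_n(t_{n-1}, t_n) 1_E(t_n) λ(dt_n) ⋯ λ(dt₁)`,
so that `compKer lam [k₁, …, k_n] = Kⁿ = K^{1,n}` of the recursive definition. -/
noncomputable def compKer {S : Type*} [MeasurableSpace S] (lam : Measure S) :
    List (S → S → ℝ≥0) → S → Set S → ℝ≥0∞
  | [] => fun s E => E.indicator (fun _ => (1 : ℝ≥0∞)) s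
  | kk :: ks => fun s E => ∫⁻ t, (kk s t : ℝ≥0∞) * compKer lam ks t E ∂lam

section Aux

variable {S : Type*} [MeasurableSpace S] {lam : Measure S}

private lemma abk (κ a b : ℝ) (hκ : 1 ≤ κ) (ha0 : 0 ≤ a) (ha1 : a ≤ 1) (hb0 : 0 ≤ b)
    (hb1 : b ≤ 1) (h : a * (1 - b) ≤ κ ^ 2 * (b * (1 - a))) : a - b ≤ (κ - 1) / (κ + 1) := by
  rw [le_div_iff₀ (by linarith)]
  have h2 : κ ^ 2 * (a - b) ≤ (κ ^ 2 - 1) * (a * (1 - b)) := by nlinarith [h]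
  have h3 : 4 * (a * (1 - b)) ≤ (1 + (a - b)) ^ 2 := by nlinarith [sq_nonneg (a + b - 1)]
  have h4 : 0 ≤ (κ ^ 2 - 1) * (1 + (a - b)) ^ 2 - 4 * (κ ^ 2 * (a - b)) := by
    nlinarith [mul_le_mul_of_nonneg_left h3 (by nlinarith : (0:ℝ) ≤ κ ^ 2 - 1), h2]
  by_contra hc
  push_neg at hc
  nlinarith [mul_pos (by linarith : (0:ℝ) < (a - b) * (κ + 1) - (κ - 1))
    (by nlinarith : (0:ℝ) < (κ + 1) - (κ - 1) * (a - b))]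

private lemma ddr {a b c : ℝ} (h : a ≤ b) (hc : 0 < c) : a / c ≤ b / c := by
  apply div_le_div_of_nonneg_right h hc.le

private lemma cross_int (v₁ v₂ X Y : S → ℝ≥0∞) (hv₁ : Measurable v₁) (hv₂ : Measurable v₂)
    (hX : Measurable X) (hY : Measurable Y) (C : ℝ≥0∞)
    (hcr : ∀ t u, v₁ t * v₂ u ≤ C * (v₂ t * v₁ u)) :
    (∫⁻ t, v₁ t * X t ∂lam) * (∫⁻ u, v₂ u * Y u ∂lam) ≤
      C * ((∫⁻ t, v₂ t * X t ∂lam) * (∫⁻ u, v₁ u * Y u ∂lam)) := by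
  have h1 : ∀ u, (∫⁻ t, v₁ t * X t ∂lam) * (v₂ u * Y u) ≤
      (∫⁻ t, v₂ t * X t ∂lam) * (C * (v₁ u * Y u)) := by
    intro u
    rw [← lintegral_mul_const (f := fun t => v₁ t * X t) _ (hv₁.mul hX),
      ← lintegral_mul_const (f := fun t => v₂ t * X t) _ (hv₂.mul hX)]
    refine lintegral_mono fun t => ?_
    calc v₁ t * X t * (v₂ u * Y u) = (v₁ t * v₂ u) * (X t * Y u) := by ring
      _ ≤ (C * (v₂ t * v₁ u)) * (X t * Y u) := mul_le_mul_left (hcr t u) _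
      _ = v₂ t * X t * (C * (v₁ u * Y u)) := by ring
  calc (∫⁻ t, v₁ t * X t ∂lam) * (∫⁻ u, v₂ u * Y u ∂lam)
      = ∫⁻ u, (∫⁻ t, v₁ t * X t ∂lam) * (v₂ u * Y u) ∂lam :=
        (lintegral_const_mul _ (hv₂.mul hY)).symm
    _ ≤ ∫⁻ u, (∫⁻ t, v₂ t * X t ∂lam) * (C * (v₁ u * Y u)) ∂lam := lintegral_mono h1
    _ = (∫⁻ t, v₂ t * X t ∂lam) * ∫⁻ u, C * (v₁ u * Y u) ∂lam :=
        lintegral_const_mul _ (measurable_const.mul (hv₁.mul hY))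
    _ = (∫⁻ t, v₂ t * X t ∂lam) * (C * ∫⁻ u, v₁ u * Y u ∂lam) := by
        rw [lintegral_const_mul (f := fun u => v₁ u * Y u) _ (hv₁.mul hY)]
    _ = C * ((∫⁻ t, v₂ t * X t ∂lam) * (∫⁻ u, v₁ u * Y u ∂lam)) := by ring

private lemma hopf (w₁ w₂ f : S → ℝ≥0∞)
    (hw₁ : Measurable w₁) (hw₂ : Measurable w₂) (hf : Measurable f)
    (hf1 : ∀ t, f t ≤ 1)
    (κ : ℝ) (hκ : 1 ≤ κ)
    (hcr : ∀ t u, w₁ t * w₂ u ≤ ENNReal.ofReal (κ ^ 2) * (w₂ t * w₁ u))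
    (mE ME : ℝ) (hm0 : 0 ≤ mE) (hME : ME ≤ 1) (hmM : mE ≤ ME)
    (hfb : ∀ t, w₁ t ≠ 0 → ENNReal.ofReal mE ≤ f t ∧ f t ≤ ENNReal.ofReal ME)
    (hw12 : ∀ t, w₁ t = 0 ↔ w₂ t = 0)
    (hW₁pos : 0 < ∫⁻ t, w₁ t ∂lam) (hW₁fin : ∫⁻ t, w₁ t ∂lam < ⊤)
    (hW₂pos : 0 < ∫⁻ t, w₂ t ∂lam) (hW₂fin : ∫⁻ t, w₂ t ∂lam < ⊤) :
    |(∫⁻ t, w₁ t * f t ∂lam).toReal / (∫⁻ t, w₁ t ∂lam).toReal -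
     (∫⁻ t, w₂ t * f t ∂lam).toReal / (∫⁻ t, w₂ t ∂lam).toReal| ≤
    (κ - 1) / (κ + 1) * (ME - mE) := by
  set m := ENNReal.ofReal mE with hm_def
  set M := ENNReal.ofReal ME with hM_def
  have hM1 : M ≤ 1 := ENNReal.ofReal_le_one.2 hME
  have hmM' : m ≤ M := ENNReal.ofReal_le_ofReal hmM
  have hfb₂ : ∀ t, w₂ t ≠ 0 → m ≤ f t ∧ f t ≤ M := fun t ht =>
    hfb t (fun h0 => ht ((hw12 t).1 h0))
  set W₁ := ∫⁻ t, w₁ t ∂lam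
  set W₂ := ∫⁻ t, w₂ t ∂lam
  set A₁ := ∫⁻ t, w₁ t * f t ∂lam with hA₁def
  set A₂ := ∫⁻ t, w₂ t * f t ∂lam with hA₂def
  set P₁ := ∫⁻ t, w₁ t * (f t - m) ∂lam with hP₁def
  set P₂ := ∫⁻ t, w₂ t * (f t - m) ∂lam with hP₂def
  set Q₁ := ∫⁻ t, w₁ t * (M - f t) ∂lam with hQ₁def
  set Q₂ := ∫⁻ t, w₂ t * (M - f t) ∂lam with hQ₂def
  have hsplitP : ∀ (w : S → ℝ≥0∞), (∀ t, w t ≠ 0 → m ≤ f t ∧ f t ≤ M) → Measurable w →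
      (∫⁻ t, w t * (f t - m) ∂lam) + m * (∫⁻ t, w t ∂lam) = ∫⁻ t, w t * f t ∂lam := by
    intro w hb hw
    rw [← lintegral_const_mul _ hw, ← lintegral_add_left (f := fun t => w t * (f t - m)) (hw.mul (hf.sub measurable_const))]
    refine lintegral_congr fun t => ?_
    by_cases h0 : w t = 0
    · simp [h0]
    · rw [mul_comm m (w t), ← mul_add, tsub_add_cancel_of_le (hb t h0).1]
  have hsplitQ : ∀ (w : S → ℝ≥0∞), (∀ t, w t ≠ 0 → m ≤ f t ∧ f t ≤ M) → Measurable w →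
      (∫⁻ t, w t * (M - f t) ∂lam) + (∫⁻ t, w t * f t ∂lam) = M * (∫⁻ t, w t ∂lam) := by
    intro w hb hw
    rw [← lintegral_const_mul _ hw,
      ← lintegral_add_left (f := fun t => w t * (M - f t)) (hw.mul (measurable_const.sub hf))]
    refine lintegral_congr fun t => ?_
    by_cases h0 : w t = 0
    · simp [h0]
    · rw [mul_comm M (w t), ← mul_add, tsub_add_cancel_of_le (hb t h0).2]
  have hidP₁ := hsplitP w₁ hfb hw₁
  have hidP₂ := hsplitP w₂ hfb₂ hw₂
  have hidQ₁ := hsplitQ w₁ hfb hw₁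
  have hidQ₂ := hsplitQ w₂ hfb₂ hw₂
  have hA₁W : A₁ ≤ W₁ := lintegral_mono fun t => by
    simpa using mul_le_mul_right (hf1 t) (w₁ t)
  have hA₂W : A₂ ≤ W₂ := lintegral_mono fun t => by
    simpa using mul_le_mul_right (hf1 t) (w₂ t)
  have hA₁fin : A₁ < ⊤ := lt_of_le_of_lt hA₁W hW₁fin
  have hA₂fin : A₂ < ⊤ := lt_of_le_of_lt hA₂W hW₂fin
  have hP₁fin : P₁ < ⊤ := lt_of_le_of_lt (le_trans (lintegral_mono fun t =>
    mul_le_mul_right (tsub_le_self) _) hA₁W) hW₁fin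
  have hP₂fin : P₂ < ⊤ := lt_of_le_of_lt (le_trans (lintegral_mono fun t =>
    mul_le_mul_right (tsub_le_self) _) hA₂W) hW₂fin
  have hQ₁fin : Q₁ < ⊤ := lt_of_le_of_lt (lintegral_mono fun t => by
    calc w₁ t * (M - f t) ≤ w₁ t * 1 := mul_le_mul_right (le_trans tsub_le_self hM1) _
      _ = w₁ t := mul_one _) hW₁fin
  have hQ₂fin : Q₂ < ⊤ := lt_of_le_of_lt (lintegral_mono fun t => by
    calc w₂ t * (M - f t) ≤ w₂ t * 1 := mul_le_mul_right (le_trans tsub_le_self hM1) _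
      _ = w₂ t := mul_one _) hW₂fin
  have hcr' : ∀ t u, w₂ t * w₁ u ≤ ENNReal.ofReal (κ ^ 2) * (w₁ t * w₂ u) := by
    intro t u
    calc w₂ t * w₁ u = w₁ u * w₂ t := mul_comm _ _
      _ ≤ ENNReal.ofReal (κ ^ 2) * (w₂ u * w₁ t) := hcr u t
      _ = ENNReal.ofReal (κ ^ 2) * (w₁ t * w₂ u) := by ring
  have key₁ : P₁ * Q₂ ≤ ENNReal.ofReal (κ ^ 2) * (P₂ * Q₁) :=
    cross_int w₁ w₂ _ _ hw₁ hw₂ (hf.sub measurable_const) (measurable_const.sub hf) _ hcr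
  have key₂ : P₂ * Q₁ ≤ ENNReal.ofReal (κ ^ 2) * (P₁ * Q₂) :=
    cross_int w₂ w₁ _ _ hw₂ hw₁ (hf.sub measurable_const) (measurable_const.sub hf) _ hcr'
  set ω₁ := W₁.toReal with hω₁def
  set ω₂ := W₂.toReal with hω₂def
  have hω₁pos : 0 < ω₁ := ENNReal.toReal_pos hW₁pos.ne' hW₁fin.ne
  have hω₂pos : 0 < ω₂ := ENNReal.toReal_pos hW₂pos.ne' hW₂fin.ne
  set a₁ := A₁.toReal
  set a₂ := A₂.toReal
  have hrealP₁ : P₁.toReal + mE * ω₁ = a₁ := by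
    have := congrArg ENNReal.toReal hidP₁
    rwa [ENNReal.toReal_add hP₁fin.ne (ENNReal.mul_lt_top ENNReal.ofReal_lt_top hW₁fin).ne,
      ENNReal.toReal_mul, ENNReal.toReal_ofReal hm0] at this
  have hrealP₂ : P₂.toReal + mE * ω₂ = a₂ := by
    have := congrArg ENNReal.toReal hidP₂
    rwa [ENNReal.toReal_add hP₂fin.ne (ENNReal.mul_lt_top ENNReal.ofReal_lt_top hW₂fin).ne,
      ENNReal.toReal_mul, ENNReal.toReal_ofReal hm0] at this
  have hrealQ₁ : Q₁.toReal + a₁ = ME * ω₁ := by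
    have := congrArg ENNReal.toReal hidQ₁
    rwa [ENNReal.toReal_add hQ₁fin.ne hA₁fin.ne, ENNReal.toReal_mul,
      ENNReal.toReal_ofReal (le_trans hm0 hmM)] at this
  have hrealQ₂ : Q₂.toReal + a₂ = ME * ω₂ := by
    have := congrArg ENNReal.toReal hidQ₂
    rwa [ENNReal.toReal_add hQ₂fin.ne hA₂fin.ne, ENNReal.toReal_mul,
      ENNReal.toReal_ofReal (le_trans hm0 hmM)] at this
  have hkey₁ : P₁.toReal * Q₂.toReal ≤ κ ^ 2 * (P₂.toReal * Q₁.toReal) := by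
    have := ENNReal.toReal_mono (by
      exact (ENNReal.mul_lt_top ENNReal.ofReal_lt_top
        (ENNReal.mul_lt_top hP₂fin hQ₁fin)).ne) key₁
    rwa [ENNReal.toReal_mul, ENNReal.toReal_mul, ENNReal.toReal_mul,
      ENNReal.toReal_ofReal (sq_nonneg κ)] at this
  have hkey₂ : P₂.toReal * Q₁.toReal ≤ κ ^ 2 * (P₁.toReal * Q₂.toReal) := by
    have := ENNReal.toReal_mono (by
      exact (ENNReal.mul_lt_top ENNReal.ofReal_lt_top
        (ENNReal.mul_lt_top hP₁fin hQ₂fin)).ne) key₂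
    rwa [ENNReal.toReal_mul, ENNReal.toReal_mul, ENNReal.toReal_mul,
      ENNReal.toReal_ofReal (sq_nonneg κ)] at this
  have hP₁0 : 0 ≤ P₁.toReal := ENNReal.toReal_nonneg
  have hP₂0 : 0 ≤ P₂.toReal := ENNReal.toReal_nonneg
  have hQ₁0 : 0 ≤ Q₁.toReal := ENNReal.toReal_nonneg
  have hQ₂0 : 0 ≤ Q₂.toReal := ENNReal.toReal_nonneg
  clear_value m M W₁ W₂ A₁ A₂ P₁ P₂ Q₁ Q₂ ω₁ ω₂ a₁ a₂
  set r₁ := a₁ / ω₁ with hr₁def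
  set r₂ := a₂ / ω₂ with hr₂def
  have hr₁low : mE ≤ r₁ := by
    rw [hr₁def, le_div_iff₀ hω₁pos]; nlinarith
  have hr₂low : mE ≤ r₂ := by
    rw [hr₂def, le_div_iff₀ hω₂pos]; nlinarith
  have hr₁up : r₁ ≤ ME := by
    rw [hr₁def, div_le_iff₀ hω₁pos]; nlinarith
  have hr₂up : r₂ ≤ ME := by
    rw [hr₂def, div_le_iff₀ hω₂pos]; nlinarith
  have hc0 : 0 ≤ (κ - 1) / (κ + 1) := div_nonneg (by linarith) (by linarith)
  rcases eq_or_lt_of_le hmM with heq | hlt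
  · have : r₁ = r₂ := le_antisymm (le_trans hr₁up (heq ▸ hr₂low))
      (le_trans hr₂up (heq ▸ hr₁low))
    rw [this, sub_self, abs_zero]
    exact mul_nonneg hc0 (by linarith)
  · set d := ME - mE with hd_def
    have hd : 0 < d := by linarith
    set α := (r₁ - mE) / d with hα_def
    have ha0 : 0 ≤ α := div_nonneg (by linarith) hd.le
    have ha1 : α ≤ 1 := by rw [hα_def, div_le_one hd]; linarith
    set β := (r₂ - mE) / d with hβ_def
    have hb0 : 0 ≤ β := div_nonneg (by linarith) hd.le
    have hb1 : β ≤ 1 := by rw [hβ_def, div_le_one hd]; linarith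
    have har₁ : a₁ = r₁ * ω₁ := (div_mul_cancel₀ a₁ hω₁pos.ne').symm
    have har₂ : a₂ = r₂ * ω₂ := (div_mul_cancel₀ a₂ hω₂pos.ne').symm
    have hPr₁ : P₁.toReal = (r₁ - mE) * ω₁ := by linear_combination hrealP₁ + har₁
    have hPr₂ : P₂.toReal = (r₂ - mE) * ω₂ := by linear_combination hrealP₂ + har₂
    have hQr₁ : Q₁.toReal = (ME - r₁) * ω₁ := by linear_combination hrealQ₁ - har₁
    have hQr₂ : Q₂.toReal = (ME - r₂) * ω₂ := by linear_combination hrealQ₂ - har₂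
    have hωd : 0 < ω₁ * ω₂ * d ^ 2 := by positivity
    have e1 : α * (1 - β) = (P₁.toReal * Q₂.toReal) / (ω₁ * ω₂ * d ^ 2) := by
      rw [hPr₁, hQr₂, hα_def, hβ_def]; field_simp; ring
    have e2 : β * (1 - α) = (P₂.toReal * Q₁.toReal) / (ω₁ * ω₂ * d ^ 2) := by
      rw [hPr₂, hQr₁, hα_def, hβ_def]; field_simp; ring
    have hab₁ : α * (1 - β) ≤ κ ^ 2 * (β * (1 - α)) := by
      rw [e1, e2, ← mul_div_assoc]
      exact ddr hkey₁ hωd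
    have hab₂ : β * (1 - α) ≤ κ ^ 2 * (α * (1 - β)) := by
      rw [e2, e1, ← mul_div_assoc]
      exact ddr hkey₂ hωd
    have habs : |α - β| ≤ (κ - 1) / (κ + 1) :=
      abs_sub_le_iff.2 ⟨abk κ α β hκ ha0 ha1 hb0 hb1 hab₁, abk κ β α hκ hb0 hb1 ha0 ha1 hab₂⟩
    have hα' : α * d = r₁ - mE := div_mul_cancel₀ _ hd.ne'
    have hβ' : β * d = r₂ - mE := div_mul_cancel₀ _ hd.ne'
    have hrr : r₁ - r₂ = (α - β) * d := by linear_combination hβ' - hα'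
    calc |r₁ - r₂| = |α - β| * d := by rw [hrr, abs_mul, abs_of_pos hd]
      _ ≤ (κ - 1) / (κ + 1) * d := mul_le_mul_of_nonneg_right habs hd.le

private lemma compKer_cons {kk : S → S → ℝ≥0} {ks : List (S → S → ℝ≥0)}
    {s : S} {E : Set S} :
    compKer lam (kk :: ks) s E = ∫⁻ t, (kk s t : ℝ≥0∞) * compKer lam ks t E ∂lam := rfl

private lemma compKer_mono {ks : List (S → S → ℝ≥0)} {E E' : Set S} (h : E ⊆ E') (s : S) :
    compKer lam ks s E ≤ compKer lam ks s E' := by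
  induction ks generalizing s with
  | nil =>
    simp only [compKer]
    by_cases hs : s ∈ E
    · simp [Set.indicator_of_mem hs, Set.indicator_of_mem (h hs)]
    · simp [Set.indicator_of_notMem hs]
  | cons kk ks ih =>
    exact lintegral_mono fun t => mul_le_mul_right (ih t) _

private lemma compKer_meas [SigmaFinite lam] {ks : List (S → S → ℝ≥0)}
    (hm : ∀ k' ∈ ks, Measurable fun p : S × S => k' p.1 p.2) {E : Set S}
    (hE : MeasurableSet E) : Measurable fun s => compKer lam ks s E := by
  induction ks with
  | nil => exact (measurable_const (a := (1:ℝ≥0∞))).indicator hE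
  | cons kk ks ih =>
    have h1 : Measurable fun p : S × S => (kk p.1 p.2 : ℝ≥0∞) :=
      (hm kk (List.mem_cons_self)).coe_nnreal_ennreal
    have h2 : Measurable fun p : S × S => (kk p.1 p.2 : ℝ≥0∞) * compKer lam ks p.2 E :=
      h1.mul ((ih (fun k' hk' => hm k' (List.mem_cons_of_mem _ hk'))).comp measurable_snd)
    exact h2.lintegral_prod_right'

private lemma compKer_bound {ks : List (S → S → ℝ≥0)}
    (hm : ∀ k' ∈ ks, Measurable fun p : S × S => k' p.1 p.2)
    (hb : ∀ k' ∈ ks, ∃ C : ℝ≥0∞, C < ⊤ ∧ ∀ s, ∫⁻ t, (k' s t : ℝ≥0∞) ∂lam ≤ C) :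
    ∃ C : ℝ≥0∞, C < ⊤ ∧ ∀ s E, compKer lam ks s E ≤ C := by
  induction ks with
  | nil =>
    refine ⟨1, ENNReal.one_lt_top, fun s E => ?_⟩
    simp only [compKer]
    by_cases hs : s ∈ E <;> simp [Set.indicator_apply, hs]
  | cons kk ks ih =>
    obtain ⟨C, hC, hCle⟩ := ih (fun k' hk' => hm k' (List.mem_cons_of_mem _ hk'))
      (fun k' hk' => hb k' (List.mem_cons_of_mem _ hk'))
    obtain ⟨C0, hC0, hC0le⟩ := hb kk (List.mem_cons_self)
    refine ⟨C0 * C, ENNReal.mul_lt_top hC0 hC, fun s E => ?_⟩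
    calc ∫⁻ t, (kk s t : ℝ≥0∞) * compKer lam ks t E ∂lam
        ≤ ∫⁻ t, (kk s t : ℝ≥0∞) * C ∂lam := lintegral_mono fun t => mul_le_mul_right (hCle t E) _
      _ = (∫⁻ t, (kk s t : ℝ≥0∞) ∂lam) * C := lintegral_mul_const _
          (((hm kk (List.mem_cons_self)).comp measurable_prodMk_left).coe_nnreal_ennreal)
      _ ≤ C0 * C := mul_le_mul_left (hC0le s) _

private lemma compKer_ofFn_zero {n : ℕ} (hn : 0 < n) (ks : Fin n → S → S → ℝ≥0) {t : S}
    (h : ∀ u, ks ⟨0, hn⟩ t u = 0) (E : Set S) : compKer lam (List.ofFn ks) t E = 0 := by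
  obtain ⟨n', rfl⟩ : ∃ n', n = n' + 1 := ⟨n - 1, by omega⟩
  have h0 : (0 : Fin (n' + 1)) = ⟨0, hn⟩ := by ext; simp
  rw [List.ofFn_succ, compKer_cons]
  have : ∀ u, ks 0 t u = 0 := fun u => h0 ▸ h u
  simp [this]

private lemma compKer_last {G : Set S} : ∀ (ks : List (S → S → ℝ≥0)) (kl : S → S → ℝ≥0),
    (∀ s t, t ∉ G → kl s t = 0) → ∀ (s : S) (E : Set S),
    compKer lam (ks ++ [kl]) s E = compKer lam (ks ++ [kl]) s (E ∩ G) := by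
  intro ks
  induction ks with
  | nil =>
    intro kl hkl s E
    show (∫⁻ t, _ ∂lam) = ∫⁻ t, _ ∂lam
    refine lintegral_congr fun t => ?_
    by_cases ht : t ∈ G
    · by_cases htE : t ∈ E <;>
        simp [compKer, Set.indicator_apply, ht, htE]
    · simp [hkl s t ht]
  | cons kk ks ih =>
    intro kl hkl s E
    show (∫⁻ t, _ ∂lam) = ∫⁻ t, _ ∂lam
    exact lintegral_congr fun t =>
      congrArg (fun x => (kk s t : ℝ≥0∞) * x) (ih kl hkl t E)

private lemma aux {S : Type*} [MeasurableSpace S] {lam : Measure S} [SigmaFinite lam] :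
    ∀ (n : ℕ) (k : Fin n → S → S → ℝ≥0),
    (∀ m, Measurable fun p : S × S => k m p.1 p.2) →
    (∀ m, ∃ C : ℝ≥0∞, C < ⊤ ∧ ∀ s, ∫⁻ t, (k m s t : ℝ≥0∞) ∂lam ≤ C) →
    ∀ (F G : Fin n → Set S),
    (∀ m, (∀ s ∈ F m, ∀ t ∈ G m, 0 < k m s t) ∧
      ∀ s t, (s, t) ∉ (F m) ×ˢ (G m) → k m s t = 0) →
    ∀ (κ : Fin n → ℝ), (∀ m, 1 ≤ κ m) →
    (∀ m, ∀ s₁ ∈ F m, ∀ s₂ ∈ F m, ∀ t₁ ∈ G m, ∀ t₂ ∈ G m,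
      (k m s₁ t₁ : ℝ) * (k m s₂ t₂ : ℝ) ≤ (κ m) ^ 2 * ((k m s₂ t₁ : ℝ) * (k m s₁ t₂ : ℝ))) →
    ∀ s₁ s₂ : S, (∀ h : 0 < n, s₁ ∈ F ⟨0, h⟩ ∧ s₂ ∈ F ⟨0, h⟩) →
    0 < compKer lam (List.ofFn k) s₁ Set.univ →
    0 < compKer lam (List.ofFn k) s₂ Set.univ →
    ∀ E : Set S, MeasurableSet E →
    |(compKer lam (List.ofFn k) s₁ E).toReal /
        (compKer lam (List.ofFn k) s₁ Set.univ).toReal -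
      (compKer lam (List.ofFn k) s₂ E).toReal /
        (compKer lam (List.ofFn k) s₂ Set.univ).toReal| ≤
    ∏ m, (κ m - 1) / (κ m + 1) := by
  intro n
  induction n with
  | zero =>
    intro k hkm hkb F G hsupp κ hκ hcross s₁ s₂ hmem hp₁ hp₂ E hE
    simp only [List.ofFn_zero, compKer, Finset.univ_eq_empty, Finset.prod_empty]
    by_cases h₁ : s₁ ∈ E <;> by_cases h₂ : s₂ ∈ E <;>
      simp [Set.indicator_apply, h₁, h₂] <;> norm_num
  | succ n ih =>
    intro k hkm hkb F G hsupp κ hκ hcross s₁ s₂ hmem hp₁ hp₂ E hE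
    obtain ⟨hs₁, hs₂⟩ := hmem (Nat.succ_pos n)
    have h00 : (⟨0, Nat.succ_pos n⟩ : Fin (n + 1)) = 0 := by ext; simp
    rw [h00] at hs₁ hs₂
    set kt : Fin n → S → S → ℝ≥0 := fun i => k i.succ with hkt
    set Ft : Fin n → Set S := fun i => F i.succ with hFt
    set Gt : Fin n → Set S := fun i => G i.succ with hGt
    set κt : Fin n → ℝ := fun i => κ i.succ with hκt
    have hL : List.ofFn k = k 0 :: List.ofFn kt := List.ofFn_succ (f := k)
    set Lt := List.ofFn kt with hLtdef
    have hmt : ∀ k' ∈ Lt, Measurable fun p : S × S => k' p.1 p.2 := by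
      intro k' hk'
      rw [hLtdef, List.mem_ofFn] at hk'
      obtain ⟨i, rfl⟩ := hk'
      exact hkm i.succ
    have hbt : ∀ k' ∈ Lt, ∃ C : ℝ≥0∞, C < ⊤ ∧ ∀ s, ∫⁻ t, (k' s t : ℝ≥0∞) ∂lam ≤ C := by
      intro k' hk'
      rw [hLtdef, List.mem_ofFn] at hk'
      obtain ⟨i, rfl⟩ := hk'
      exact hkb i.succ
    obtain ⟨Ct, hCt, hCtle⟩ := compKer_bound hmt hbt
    set g : S → ℝ≥0∞ := fun t => compKer lam Lt t Set.univ with hgdef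
    have hgmeas : Measurable g := compKer_meas hmt MeasurableSet.univ
    have hgfin : ∀ t, g t ≠ ⊤ := fun t => (lt_of_le_of_lt (hCtle t _) hCt).ne
    set fE : S → ℝ≥0∞ := fun t => compKer lam Lt t E / g t with hfEdef
    have hfEmeas : Measurable fE := (compKer_meas hmt hE).div hgmeas
    have hfE1 : ∀ t, fE t ≤ 1 := fun t => ENNReal.div_le_of_le_mul
      (by rw [one_mul]; exact compKer_mono (Set.subset_univ E) t)
    set w₁ : S → ℝ≥0∞ := fun t => (k 0 s₁ t : ℝ≥0∞) * g t with hw₁def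
    set w₂ : S → ℝ≥0∞ := fun t => (k 0 s₂ t : ℝ≥0∞) * g t with hw₂def
    have hk0meas : ∀ s : S, Measurable fun t => ((k 0 s t : ℝ≥0) : ℝ≥0∞) := fun s =>
      ((hkm 0).comp measurable_prodMk_left).coe_nnreal_ennreal
    have hw₁meas : Measurable w₁ := (hk0meas s₁).mul hgmeas
    have hw₂meas : Measurable w₂ := (hk0meas s₂).mul hgmeas
    -- identification
    have hKE : ∀ s : S, compKer lam (List.ofFn k) s E
        = ∫⁻ t, ((k 0 s t : ℝ≥0∞) * g t) * fE t ∂lam := by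
      intro s
      rw [hL, compKer_cons]
      refine lintegral_congr fun t => ?_
      by_cases h0 : g t = 0
      · have hz : compKer lam Lt t E = 0 :=
          le_antisymm (h0 ▸ compKer_mono (Set.subset_univ E) t) zero_le
        simp [hfEdef, hz, h0]
      · rw [hfEdef, mul_assoc, ENNReal.mul_div_cancel h0 (hgfin t)]
    have hKuniv : ∀ s : S, compKer lam (List.ofFn k) s Set.univ
        = ∫⁻ t, (k 0 s t : ℝ≥0∞) * g t ∂lam := by
      intro s; rw [hL, compKer_cons]
    -- cross ratio for weights
    have hcoe : ∀ a b : ℝ≥0, ((a : ℝ≥0∞) * b) = ENNReal.ofReal ((a : ℝ) * b) := by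
      intro a b
      rw [ENNReal.ofReal_mul a.coe_nonneg, ENNReal.ofReal_coe_nnreal,
        ENNReal.ofReal_coe_nnreal]
    have hcr : ∀ t u, w₁ t * w₂ u ≤ ENNReal.ofReal (κ 0 ^ 2) * (w₂ t * w₁ u) := by
      intro t u
      by_cases ht : t ∈ G 0
      · by_cases hu : u ∈ G 0
        · have hreal := hcross 0 s₁ hs₁ s₂ hs₂ t ht u hu
          have hmid : (k 0 s₁ t : ℝ≥0∞) * (k 0 s₂ u) ≤
              ENNReal.ofReal (κ 0 ^ 2) * ((k 0 s₂ t : ℝ≥0∞) * (k 0 s₁ u)) := by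
            rw [hcoe, hcoe, ← ENNReal.ofReal_mul (by positivity)]
            exact ENNReal.ofReal_le_ofReal hreal
          calc w₁ t * w₂ u
              = ((k 0 s₁ t : ℝ≥0∞) * (k 0 s₂ u)) * (g t * g u) := by
                rw [hw₁def, hw₂def]; ring
            _ ≤ (ENNReal.ofReal (κ 0 ^ 2) * ((k 0 s₂ t : ℝ≥0∞) * (k 0 s₁ u))) * (g t * g u) :=
                mul_le_mul_left hmid _
            _ = ENNReal.ofReal (κ 0 ^ 2) * (w₂ t * w₁ u) := by
                rw [hw₁def, hw₂def]; ring
        · have h0 : k 0 s₂ u = 0 := (hsupp 0).2 s₂ u (fun hm' => hu hm'.2)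
          simp [hw₂def, h0]
      · have h0 : k 0 s₁ t = 0 := (hsupp 0).2 s₁ t (fun hm' => ht hm'.2)
        simp [hw₁def, h0]
    have hw12 : ∀ t, w₁ t = 0 ↔ w₂ t = 0 := by
      intro t
      by_cases ht : t ∈ G 0
      · have h1 := ((hsupp 0).1 s₁ hs₁ t ht).ne'
        have h2 := ((hsupp 0).1 s₂ hs₂ t ht).ne'
        simp [hw₁def, hw₂def, mul_eq_zero, h1, h2]
      · have h1 : k 0 s₁ t = 0 := (hsupp 0).2 s₁ t (fun hm' => ht hm'.2)
        have h2 : k 0 s₂ t = 0 := (hsupp 0).2 s₂ t (fun hm' => ht hm'.2)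
        simp [hw₁def, hw₂def, h1, h2]
    -- positivity and finiteness of the weights' masses
    obtain ⟨Cf, hCf, hCfle⟩ := compKer_bound (ks := List.ofFn k)
      (by intro k' hk'; rw [List.mem_ofFn] at hk'; obtain ⟨i, rfl⟩ := hk'; exact hkm i)
      (by intro k' hk'; rw [List.mem_ofFn] at hk'; obtain ⟨i, rfl⟩ := hk'; exact hkb i)
    have hW₁pos : 0 < ∫⁻ t, w₁ t ∂lam := by rw [← hKuniv s₁]; exact hp₁
    have hW₂pos : 0 < ∫⁻ t, w₂ t ∂lam := by rw [← hKuniv s₂]; exact hp₂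
    have hW₁fin : (∫⁻ t, w₁ t ∂lam) < ⊤ := by
      rw [← hKuniv s₁]; exact lt_of_le_of_lt (hCfle s₁ _) hCf
    have hW₂fin : (∫⁻ t, w₂ t ∂lam) < ⊤ := by
      rw [← hKuniv s₂]; exact lt_of_le_of_lt (hCfle s₂ _) hCf
    -- tail memberships from positivity of g
    have hmemt : ∀ t : S, g t ≠ 0 → ∀ h : 0 < n, t ∈ Ft ⟨0, h⟩ := by
      intro t hgt h
      by_contra htF
      refine hgt (compKer_ofFn_zero h kt (fun u => ?_) Set.univ)
      exact (hsupp (⟨0, h⟩ : Fin n).succ).2 t u (fun hm' => htF hm'.1)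
    -- oscillation bounds via the inductive hypothesis
    set D := ∏ i : Fin n, (κt i - 1) / (κt i + 1) with hD
    have hD0 : 0 ≤ D :=
      Finset.prod_nonneg fun i _ => div_nonneg (by linarith [hκ i.succ]) (by linarith [hκ i.succ])
    set φ : S → ℝ := fun t => (fE t).toReal with hφ
    have hφ0 : ∀ t, 0 ≤ φ t := fun t => ENNReal.toReal_nonneg
    have hφ1 : ∀ t, φ t ≤ 1 := by
      intro t
      calc φ t ≤ (1 : ℝ≥0∞).toReal := ENNReal.toReal_mono (by simp) (hfE1 t)
        _ = 1 := by simp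
    set P : Set S := {t | w₁ t ≠ 0} with hP
    have hPprop : ∀ t ∈ P, k 0 s₁ t ≠ 0 ∧ g t ≠ 0 := by
      intro t ht
      have : (k 0 s₁ t : ℝ≥0∞) ≠ 0 ∧ g t ≠ 0 := by
        rw [hP] at ht; simpa [hw₁def, mul_eq_zero, not_or] using ht
      exact ⟨by simpa using this.1, this.2⟩
    have hpair : ∀ t ∈ P, ∀ u ∈ P, |φ t - φ u| ≤ D := by
      intro t ht u hu
      have hgt := (hPprop t ht).2
      have hgu := (hPprop u hu).2
      have hmem' : ∀ h : 0 < n, t ∈ Ft ⟨0, h⟩ ∧ u ∈ Ft ⟨0, h⟩ :=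
        fun h => ⟨hmemt t hgt h, hmemt u hgu h⟩
      have := ih kt (fun i => hkm i.succ) (fun i => hkb i.succ) Ft Gt
        (fun i => hsupp i.succ) κt (fun i => hκ i.succ)
        (fun i => hcross i.succ) t u hmem'
        (pos_iff_ne_zero.2 hgt) (pos_iff_ne_zero.2 hgu) E hE
      rw [← hLtdef] at this
      simp only [hφ, hfEdef, hgdef, ENNReal.toReal_div, hD]
      exact this
    have hPne : P.Nonempty := by
      rcases Set.eq_empty_or_nonempty P with hPe | hPe
      · exfalso
        have : ∀ t, w₁ t = 0 := by
          intro t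
          by_contra hw
          exact (Set.eq_empty_iff_forall_notMem.1 hPe t) hw
        rw [lintegral_congr (g := fun _ => (0:ℝ≥0∞)) this] at hW₁pos
        simp at hW₁pos
      · exact hPe
    -- sup and inf bounds
    set ME := sSup (φ '' P) with hME
    have hbdd : BddAbove (φ '' P) := ⟨1, fun y hy => by
      obtain ⟨t, _, rfl⟩ := hy; exact hφ1 t⟩
    have hMEub : ∀ t ∈ P, φ t ≤ ME := fun t ht => le_csSup hbdd ⟨t, ht, rfl⟩
    have hME0 : 0 ≤ ME := le_trans (hφ0 hPne.choose) (hMEub _ hPne.choose_spec)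
    have hME1 : ME ≤ 1 := Real.sSup_le (fun y hy => by
      obtain ⟨t, _, rfl⟩ := hy; exact hφ1 t) zero_le_one
    have hMElb : ∀ t ∈ P, ME - D ≤ φ t := by
      intro t ht
      rw [sub_le_iff_le_add, hME]
      refine Real.sSup_le (fun y hy => ?_) (by linarith [hφ0 t])
      obtain ⟨u, hu, rfl⟩ := hy
      have := hpair u hu t ht
      have := abs_sub_le_iff.1 this
      linarith [this.1]
    set mE := max (ME - D) 0 with hmE
    have hm0 : 0 ≤ mE := le_max_right _ _
    have hmM : mE ≤ ME := max_le (by linarith) hME0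
    have hMEmE : ME - mE ≤ D := by
      rw [hmE]
      rcases le_total (ME - D) 0 with h | h
      · rw [max_eq_right h]; linarith
      · rw [max_eq_left h]; linarith
    have hfb : ∀ t, w₁ t ≠ 0 → ENNReal.ofReal mE ≤ fE t ∧ fE t ≤ ENNReal.ofReal ME := by
      intro t ht
      have htP : t ∈ P := ht
      have hfEt : fE t = ENNReal.ofReal (φ t) := by
        rw [hφ, ENNReal.ofReal_toReal (lt_of_le_of_lt (hfE1 t) (by simp)).ne]
      constructor
      · rw [hfEt]
        exact ENNReal.ofReal_le_ofReal (max_le (hMElb t htP) (hφ0 t))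
      · rw [hfEt]
        exact ENNReal.ofReal_le_ofReal (hMEub t htP)
    -- apply hopf
    have hhopf := hopf w₁ w₂ fE hw₁meas hw₂meas hfEmeas hfE1 (κ 0) (hκ 0) hcr
      mE ME hm0 hME1 hmM hfb hw12 hW₁pos hW₁fin hW₂pos hW₂fin
    have hgoal : |(compKer lam (List.ofFn k) s₁ E).toReal /
          (compKer lam (List.ofFn k) s₁ Set.univ).toReal -
        (compKer lam (List.ofFn k) s₂ E).toReal /
          (compKer lam (List.ofFn k) s₂ Set.univ).toReal| ≤
        (κ 0 - 1) / (κ 0 + 1) * (ME - mE) := by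
      rw [hKE s₁, hKE s₂, hKuniv s₁, hKuniv s₂]
      exact hhopf
    have hc0 : 0 ≤ (κ 0 - 1) / (κ 0 + 1) :=
      div_nonneg (by linarith [hκ 0]) (by linarith [hκ 0])
    calc |(compKer lam (List.ofFn k) s₁ E).toReal /
          (compKer lam (List.ofFn k) s₁ Set.univ).toReal -
        (compKer lam (List.ofFn k) s₂ E).toReal /
          (compKer lam (List.ofFn k) s₂ Set.univ).toReal|
        ≤ (κ 0 - 1) / (κ 0 + 1) * (ME - mE) := hgoal
      _ ≤ (κ 0 - 1) / (κ 0 + 1) * D := mul_le_mul_of_nonneg_left hMEmE hc0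
      _ = ∏ m : Fin (n + 1), (κ m - 1) / (κ m + 1) := by
          rw [Fin.prod_univ_succ]

end Aux

/-- For density kernels `k₁, …, k_n` with rectangular supports `F_m × G_m`
and cross-ratio bounds `κ_m²`, if `Kⁿ(s,S) > 0` on `F₁`, then for all `s₁, s₂ ∈ F₁` and all
measurable `E`,
`|Kⁿ(s₁,E)/Kⁿ(s₁,G_n) − Kⁿ(s₂,E)/Kⁿ(s₂,G_n)| ≤ ∏_m (κ_m−1)/(κ_m+1)`. -/
theorem stmt_12 {S : Type*} [MetricSpace S] [CompleteSpace S]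
    [TopologicalSpace.SeparableSpace S] [MeasurableSpace S] [BorelSpace S]
    (lam : Measure S) [SigmaFinite lam]
    (n : ℕ) (hn : 0 < n)
    (k : Fin n → S → S → ℝ≥0)
    (hkm : ∀ m, Measurable fun p : S × S => k m p.1 p.2)
    (hkb : ∀ m, ∃ C : ℝ≥0∞, C < ⊤ ∧ ∀ s, ∫⁻ t, (k m s t : ℝ≥0∞) ∂lam ≤ C)
    (F G : Fin n → Set S)
    (hFm : ∀ m, MeasurableSet (F m)) (hGm : ∀ m, MeasurableSet (G m))
    (hFpos : ∀ m, 0 < lam (F m)) (hGpos : ∀ m, 0 < lam (G m))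
    (hsupp : ∀ m, (∀ s ∈ F m, ∀ t ∈ G m, 0 < k m s t) ∧
      ∀ s t, (s, t) ∉ (F m) ×ˢ (G m) → k m s t = 0)
    (κ : Fin n → ℝ) (hκ : ∀ m, 1 ≤ κ m)
    (hcross : ∀ m, ∀ s₁ ∈ F m, ∀ s₂ ∈ F m, ∀ t₁ ∈ G m, ∀ t₂ ∈ G m,
      (k m s₁ t₁ : ℝ) * (k m s₂ t₂ : ℝ) ≤ (κ m) ^ 2 * ((k m s₂ t₁ : ℝ) * (k m s₁ t₂ : ℝ)))
    (hKpos : ∀ s ∈ F ⟨0, hn⟩, 0 < compKer lam (List.ofFn k) s Set.univ) :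
    ∀ s₁ ∈ F ⟨0, hn⟩, ∀ s₂ ∈ F ⟨0, hn⟩, ∀ E : Set S, MeasurableSet E →
      |(compKer lam (List.ofFn k) s₁ E).toReal /
          (compKer lam (List.ofFn k) s₁ (G ⟨n - 1, by omega⟩)).toReal -
        (compKer lam (List.ofFn k) s₂ E).toReal /
          (compKer lam (List.ofFn k) s₂ (G ⟨n - 1, by omega⟩)).toReal| ≤
        ∏ m, (κ m - 1) / (κ m + 1) := by
  intro s₁ hs₁ s₂ hs₂ E hE
  obtain ⟨n', rfl⟩ : ∃ n', n = n' + 1 := ⟨n - 1, by omega⟩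
  have hidx : (⟨n' + 1 - 1, by omega⟩ : Fin (n' + 1)) = Fin.last n' := by ext; simp
  have hklast : ∀ s t, t ∉ G (Fin.last n') → k (Fin.last n') s t = 0 :=
    fun s t ht => (hsupp _).2 s t (fun hm' => ht hm'.2)
  have hofn : List.ofFn k
      = (List.ofFn fun i : Fin n' => k i.castSucc) ++ [k (Fin.last n')] := by
    rw [List.ofFn_succ']; simp [List.concat_eq_append]
  have hGuniv : ∀ s : S, compKer lam (List.ofFn k) s (G (Fin.last n'))
      = compKer lam (List.ofFn k) s Set.univ := by
    intro s
    rw [hofn]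
    have h1 := compKer_last (lam := lam) (G := G (Fin.last n'))
      (List.ofFn fun i : Fin n' => k i.castSucc) (k (Fin.last n')) hklast s Set.univ
    rw [Set.univ_inter] at h1
    exact h1.symm
  rw [hidx, hGuniv s₁, hGuniv s₂]
  exact aux (n' + 1) k hkm hkb F G hsupp κ hκ hcross s₁ s₂
    (fun h => ⟨hs₁, hs₂⟩) (hKpos s₁ hs₁) (hKpos s₂ hs₂) E hE
end

section
/- Let u : K → ℝ be bounded with sup norm ‖u‖ and Lipschitz with respect to δ_TV with Lipschitz constant γ(u), and suppose that for every x ∈ K the function a ↦ u(h(x,a))·‖xM_a‖ is τ-measurable and τ-integrable. Define Tu(x) = ∫_A u(h(x,a)) ‖xM_a‖ τ(da). Then for all x, y ∈ K, |Tu(x) − Tu(y)| ≤ (‖u‖ + 2γ(u)) · δ_TV(x, y). -/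
open MeasureTheory
open scoped NNReal ENNReal

/-- The measure `xM_a`, `xM_a(F) = ∫_S ∫_F m(s,t,a) λ(dt) x(ds)`. -/
noncomputable def xMa {S A : Type*} [MeasurableSpace S] [MeasurableSpace A]
    (lam : Measure S) (m : S → S → A → ℝ≥0) (x : Measure S) (a : A) : Measure S :=
  x.bind fun s => lam.withDensity fun t => (m s t a : ℝ≥0∞)

/-- The map `h(x,a) = xM_a/‖xM_a‖` if `‖xM_a‖ > 0`, and `h(x,a) = x` otherwise. -/
noncomputable def hmap {S A : Type*} [MeasurableSpace S] [MeasurableSpace A]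
    (lam : Measure S) (m : S → S → A → ℝ≥0) (x : Measure S) (a : A) : Measure S :=
  if 0 < xMa lam m x a Set.univ then (xMa lam m x a Set.univ)⁻¹ • xMa lam m x a else x

section Aux

variable {S A : Type*} [MeasurableSpace S] [MeasurableSpace A]

lemma sSup_diff_withDensity (lam : Measure S) (f g : S → ℝ≥0∞)
    (hf : Measurable f) (hg : Measurable g)
    (hfi : ∫⁻ t, f t ∂lam ≠ ∞) (hgi : ∫⁻ t, g t ∂lam ≠ ∞) :
    sSup {d : ℝ | ∃ F : Set S, MeasurableSet F ∧
        d = ((lam.withDensity f) F).toReal - ((lam.withDensity g) F).toReal} =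
      (∫⁻ t, f t - g t ∂lam).toReal := by
  have hdi : ∫⁻ t, f t - g t ∂lam ≠ ∞ :=
    ne_top_of_le_ne_top hfi (lintegral_mono fun t => tsub_le_self)
  have hFf : ∀ F : Set S, MeasurableSet F → ∫⁻ t in F, f t ∂lam ≠ ∞ := fun F hF =>
    ne_top_of_le_ne_top hfi (setLIntegral_le_lintegral _ _)
  have hFg : ∀ F : Set S, MeasurableSet F → ∫⁻ t in F, g t ∂lam ≠ ∞ := fun F hF =>
    ne_top_of_le_ne_top hgi (setLIntegral_le_lintegral _ _)
  have hub : ∀ d ∈ {d : ℝ | ∃ F : Set S, MeasurableSet F ∧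
      d = ((lam.withDensity f) F).toReal - ((lam.withDensity g) F).toReal},
      d ≤ (∫⁻ t, f t - g t ∂lam).toReal := by
    rintro d ⟨F, hF, rfl⟩
    rw [withDensity_apply f hF, withDensity_apply g hF]
    have h1 : ∫⁻ t in F, f t ∂lam ≤ ∫⁻ t in F, g t ∂lam + ∫⁻ t, f t - g t ∂lam := by
      calc ∫⁻ t in F, f t ∂lam ≤ ∫⁻ t in F, g t + (f t - g t) ∂lam :=
            lintegral_mono fun t => le_add_tsub
        _ = ∫⁻ t in F, g t ∂lam + ∫⁻ t in F, f t - g t ∂lam :=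
            lintegral_add_left hg _
        _ ≤ _ := by gcongr; exact Measure.restrict_le_self
    have := ENNReal.toReal_mono (ENNReal.add_ne_top.mpr ⟨hFg F hF, hdi⟩) h1
    rw [ENNReal.toReal_add (hFg F hF) hdi] at this
    linarith
  apply le_antisymm
  · exact csSup_le ⟨0, ∅, MeasurableSet.empty, by simp⟩ hub
  · apply le_csSup ⟨_, hub⟩
    refine ⟨{t | g t < f t}, measurableSet_lt hg hf, ?_⟩
    set F := {t | g t < f t} with hFdef
    have hF : MeasurableSet F := measurableSet_lt hg hf
    have key : ∫⁻ t in F, f t ∂lam = ∫⁻ t in F, g t ∂lam + ∫⁻ t, f t - g t ∂lam := by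
      have h2 : ∫⁻ t, f t - g t ∂lam = ∫⁻ t in F, f t - g t ∂lam := by
        rw [← lintegral_add_compl _ hF]
        have : ∫⁻ t in Fᶜ, f t - g t ∂lam = 0 := by
          rw [setLIntegral_eq_zero_iff hF.compl (f := fun t => f t - g t) (hf.sub hg)]
          refine Filter.Eventually.of_forall fun t ht => tsub_eq_zero_of_le ?_
          simpa [F] using ht
        rw [this, add_zero]
      rw [h2, ← lintegral_add_left hg]
      refine setLIntegral_congr_fun hF (fun t ht => ?_)
      exact (add_tsub_cancel_of_le (le_of_lt ht)).symm
    rw [withDensity_apply f hF, withDensity_apply g hF, key,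
      ENNReal.toReal_add (hFg F hF) hdi]
    ring

lemma tvDist_withDensity (lam : Measure S) (f g : S → ℝ≥0∞)
    (hf : Measurable f) (hg : Measurable g)
    (hfi : ∫⁻ t, f t ∂lam ≠ ∞) (hgi : ∫⁻ t, g t ∂lam ≠ ∞) :
    tvDist (lam.withDensity f) (lam.withDensity g) =
      (∫⁻ t, f t - g t ∂lam).toReal + (∫⁻ t, g t - f t ∂lam).toReal := by
  rw [tvDist, sSup_diff_withDensity lam f g hf hg hfi hgi,
    sSup_diff_withDensity lam g f hg hf hgi hfi]

lemma xMa_eq (lam : Measure S) [SigmaFinite lam]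
    (m : S → S → A → ℝ≥0) (hm : Measurable fun p : S × S × A => m p.1 p.2.1 p.2.2)
    (x : Measure S) [SFinite x] (a : A) :
    xMa lam m x a = lam.withDensity (fun t => ∫⁻ s, (m s t a : ℝ≥0∞) ∂x) := by
  have hma : Measurable (fun p : S × S => (m p.1 p.2 a : ℝ≥0∞)) := by
    apply measurable_coe_nnreal_ennreal.comp
    exact hm.comp ((measurable_fst).prodMk ((measurable_snd).prodMk measurable_const))
  have hk : Measurable (fun s => lam.withDensity fun t => (m s t a : ℝ≥0∞)) := by
    apply Measure.measurable_of_measurable_coe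
    intro F hF
    simp_rw [withDensity_apply _ hF]
    exact hma.lintegral_prod_right'
  ext F hF
  rw [xMa, Measure.bind_apply hF hk.aemeasurable, withDensity_apply _ hF]
  calc ∫⁻ s, (lam.withDensity fun t => (m s t a : ℝ≥0∞)) F ∂x
      = ∫⁻ s, ∫⁻ t, (m s t a : ℝ≥0∞) ∂(lam.restrict F) ∂x := by
        simp_rw [withDensity_apply _ hF]
    _ = ∫⁻ t, ∫⁻ s, (m s t a : ℝ≥0∞) ∂x ∂(lam.restrict F) := by
        apply lintegral_lintegral_swap
        exact hma.aemeasurable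

variable (lam : Measure S) [SigmaFinite lam] (τ : Measure A) [SigmaFinite τ]
  (m : S → S → A → ℝ≥0)
variable (hm : Measurable fun p : S × S × A => m p.1 p.2.1 p.2.2)
include hm

lemma m_meas3 : Measurable fun p : A × S × S => (m p.2.2 p.2.1 p.1 : ℝ≥0∞) := by
  apply measurable_coe_nnreal_ennreal.comp
  exact hm.comp ((measurable_snd.comp measurable_snd).prodMk
    ((measurable_fst.comp measurable_snd).prodMk measurable_fst))

lemma dens_meas (φ : S → ℝ≥0∞) (hφ : Measurable φ) :
    Measurable fun p : A × S => ∫⁻ s, φ s * (m s p.2 p.1 : ℝ≥0∞) ∂lam := by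
  apply Measurable.lintegral_prod_right'
    (f := fun (p : (A × S) × S) => φ p.2 * (m p.2 p.1.2 p.1.1 : ℝ≥0∞))
  apply Measurable.mul (hφ.comp measurable_snd)
  exact (m_meas3 m hm).comp ((measurable_fst.comp measurable_fst).prodMk
    ((measurable_snd.comp measurable_fst).prodMk measurable_snd))

lemma mass_lintegral (hnorm : ∀ s : S, ∫⁻ t, ∫⁻ a, (m s t a : ℝ≥0∞) ∂τ ∂lam = 1)
    (φ : S → ℝ≥0∞) (hφ : Measurable φ) :
    ∫⁻ a, ∫⁻ t, ∫⁻ s, φ s * (m s t a : ℝ≥0∞) ∂lam ∂lam ∂τ = ∫⁻ s, φ s ∂lam := by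
  have hK : Measurable fun p : S × A => ∫⁻ t, (m p.1 t p.2 : ℝ≥0∞) ∂lam := by
    apply Measurable.lintegral_prod_right'
      (f := fun (p : (S × A) × S) => (m p.1.1 p.2 p.1.2 : ℝ≥0∞))
    apply measurable_coe_nnreal_ennreal.comp
    exact hm.comp ((measurable_fst.comp measurable_fst).prodMk
      (measurable_snd.prodMk (measurable_snd.comp measurable_fst)))
  calc ∫⁻ a, ∫⁻ t, ∫⁻ s, φ s * (m s t a : ℝ≥0∞) ∂lam ∂lam ∂τ
      = ∫⁻ a, ∫⁻ s, ∫⁻ t, φ s * (m s t a : ℝ≥0∞) ∂lam ∂lam ∂τ := by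
        refine lintegral_congr fun a => lintegral_lintegral_swap ?_
        apply AEMeasurable.mul (hφ.comp measurable_snd).aemeasurable
        refine Measurable.aemeasurable ?_
        exact (m_meas3 m hm).comp (measurable_const.prodMk
          (measurable_fst.prodMk measurable_snd))
    _ = ∫⁻ a, ∫⁻ s, φ s * ∫⁻ t, (m s t a : ℝ≥0∞) ∂lam ∂lam ∂τ := by
        refine lintegral_congr fun a => lintegral_congr fun s => lintegral_const_mul _ ?_
        exact (m_meas3 m hm).comp (measurable_const.prodMk
          (measurable_id.prodMk measurable_const))
    _ = ∫⁻ s, ∫⁻ a, φ s * ∫⁻ t, (m s t a : ℝ≥0∞) ∂lam ∂τ ∂lam := by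
        apply lintegral_lintegral_swap
        apply AEMeasurable.mul (hφ.comp measurable_snd).aemeasurable
        exact (hK.comp (measurable_snd.prodMk measurable_fst)).aemeasurable
    _ = ∫⁻ s, φ s * ∫⁻ a, ∫⁻ t, (m s t a : ℝ≥0∞) ∂lam ∂τ ∂lam := by
        refine lintegral_congr fun s => lintegral_const_mul _ ?_
        exact hK.comp (measurable_const.prodMk measurable_id)
    _ = ∫⁻ s, φ s ∂lam := by
        refine lintegral_congr fun s => ?_
        have : ∫⁻ a, ∫⁻ t, (m s t a : ℝ≥0∞) ∂lam ∂τ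
            = ∫⁻ t, ∫⁻ a, (m s t a : ℝ≥0∞) ∂τ ∂lam := by
          apply lintegral_lintegral_swap
          refine Measurable.aemeasurable ?_
          exact (m_meas3 m hm).comp (measurable_fst.prodMk
            (measurable_snd.prodMk measurable_const))
        rw [this, hnorm s, mul_one]

end Aux

section NormTV

variable {S : Type*} [MeasurableSpace S]

lemma norm_tv_bound (lam : Measure S) (fa ga pa qa : S → ℝ≥0∞)
    (hfa : Measurable fa) (hga : Measurable ga)
    (hfg : ∀ t, fa t ≤ ga t + pa t) (hgf : ∀ t, ga t ≤ fa t + qa t)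
    (hα0 : ∫⁻ t, fa t ∂lam ≠ 0) (hα : ∫⁻ t, fa t ∂lam ≠ ∞)
    (hβ0 : ∫⁻ t, ga t ∂lam ≠ 0) (hβ : ∫⁻ t, ga t ∂lam ≠ ∞) :
    (∫⁻ t, ga t ∂lam) *
        ((∫⁻ t, (∫⁻ t, fa t ∂lam)⁻¹ * fa t - (∫⁻ t, ga t ∂lam)⁻¹ * ga t ∂lam) +
          ∫⁻ t, (∫⁻ t, ga t ∂lam)⁻¹ * ga t - (∫⁻ t, fa t ∂lam)⁻¹ * fa t ∂lam) ≤
      2 * ((∫⁻ t, pa t ∂lam) + ∫⁻ t, qa t ∂lam) := by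
  set α := ∫⁻ t, fa t ∂lam with hαdef
  set β := ∫⁻ t, ga t ∂lam with hβdef
  set P := ∫⁻ t, pa t ∂lam with hPdef
  set Q := ∫⁻ t, qa t ∂lam with hQdef
  set c := β * α⁻¹ with hcdef
  have hc : c ≠ ∞ := ENNReal.mul_ne_top hβ (ENNReal.inv_ne_top.mpr hα0)
  have hβα : β * β⁻¹ = 1 := ENNReal.mul_inv_cancel hβ0 hβ
  have hαα : α⁻¹ * α = 1 := ENNReal.inv_mul_cancel hα0 hα
  have hfae : ∀ᵐ t ∂lam, fa t ≠ ∞ := by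
    filter_upwards [ae_lt_top hfa hα] with t ht using ht.ne
  have hPbd : ∫⁻ t, fa t - ga t ∂lam ≤ P :=
    lintegral_mono fun t => tsub_le_iff_left.mpr (hfg t)
  have hQbd : ∫⁻ t, ga t - fa t ∂lam ≤ Q :=
    lintegral_mono fun t => tsub_le_iff_left.mpr (hgf t)
  have hβαP : β ≤ α + Q := by
    calc β ≤ ∫⁻ t, fa t + qa t ∂lam := lintegral_mono hgf
      _ = α + Q := lintegral_add_left hfa _
  have hαβQ : α ≤ β + P := by
    calc α ≤ ∫⁻ t, ga t + pa t ∂lam := lintegral_mono hfg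
      _ = β + P := lintegral_add_left hga _
  have h1 : β * ∫⁻ t, α⁻¹ * fa t - β⁻¹ * ga t ∂lam ≤ Q + P := by
    have e1 : β * ∫⁻ t, α⁻¹ * fa t - β⁻¹ * ga t ∂lam
        = ∫⁻ t, c * fa t - ga t ∂lam := by
      rw [← lintegral_const_mul (f := fun t => α⁻¹ * fa t - β⁻¹ * ga t) _
        (((hfa.const_mul _).sub (hga.const_mul _)))]
      refine lintegral_congr fun t => ?_
      rw [ENNReal.mul_sub (fun _ _ => hβ), ← mul_assoc, ← mul_assoc, hβα, one_mul, hcdef]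
    rw [e1]
    have e2 : ∫⁻ t, c * fa t - fa t ∂lam ≤ β - α := by
      have : ∀ᵐ t ∂lam, c * fa t - fa t = (c - 1) * fa t := by
        filter_upwards [hfae] with t ht
        rw [ENNReal.sub_mul (fun _ _ => ht), one_mul]
      rw [lintegral_congr_ae this, lintegral_const_mul _ hfa, ← hαdef,
        ENNReal.sub_mul (fun _ _ => hα), one_mul, hcdef, mul_assoc, hαα, mul_one]
    calc ∫⁻ t, c * fa t - ga t ∂lam
        ≤ ∫⁻ t, (c * fa t - fa t) + (fa t - ga t) ∂lam :=
          lintegral_mono fun t => tsub_le_tsub_add_tsub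
      _ = (∫⁻ t, c * fa t - fa t ∂lam) + ∫⁻ t, fa t - ga t ∂lam :=
          lintegral_add_left ((hfa.const_mul _).sub hfa) _
      _ ≤ (β - α) + P := add_le_add e2 hPbd
      _ ≤ Q + P := by gcongr; exact tsub_le_iff_left.mpr hβαP
  have h2 : β * ∫⁻ t, β⁻¹ * ga t - α⁻¹ * fa t ∂lam ≤ Q + P := by
    have e1 : β * ∫⁻ t, β⁻¹ * ga t - α⁻¹ * fa t ∂lam
        = ∫⁻ t, ga t - c * fa t ∂lam := by
      rw [← lintegral_const_mul (f := fun t => β⁻¹ * ga t - α⁻¹ * fa t) _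
        (((hga.const_mul _).sub (hfa.const_mul _)))]
      refine lintegral_congr fun t => ?_
      rw [ENNReal.mul_sub (fun _ _ => hβ), ← mul_assoc, ← mul_assoc, hβα, one_mul, hcdef]
    rw [e1]
    have e2 : ∫⁻ t, fa t - c * fa t ∂lam ≤ α - β := by
      have : ∀ᵐ t ∂lam, fa t - c * fa t = (1 - c) * fa t := by
        filter_upwards [hfae] with t ht
        rw [ENNReal.sub_mul (fun _ _ => ht), one_mul]
      rw [lintegral_congr_ae this, lintegral_const_mul _ hfa, ← hαdef,
        ENNReal.sub_mul (fun _ _ => hα), one_mul, hcdef, mul_assoc, hαα, mul_one]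
    calc ∫⁻ t, ga t - c * fa t ∂lam
        ≤ ∫⁻ t, (ga t - fa t) + (fa t - c * fa t) ∂lam :=
          lintegral_mono fun t => tsub_le_tsub_add_tsub
      _ = (∫⁻ t, ga t - fa t ∂lam) + ∫⁻ t, fa t - c * fa t ∂lam :=
          lintegral_add_left (hga.sub hfa) _
      _ ≤ Q + (α - β) := add_le_add hQbd e2
      _ ≤ Q + P := by gcongr; exact tsub_le_iff_left.mpr hαβQ
  calc β * (_ + _) = β * ∫⁻ t, α⁻¹ * fa t - β⁻¹ * ga t ∂lam
        + β * ∫⁻ t, β⁻¹ * ga t - α⁻¹ * fa t ∂lam := mul_add _ _ _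
    _ ≤ (Q + P) + (Q + P) := add_le_add h1 h2
    _ = 2 * (P + Q) := by ring

end NormTV

/-- For a bounded Lipschitz `u : K → ℝ` (bound `Cu`, Lipschitz constant `γu`
with respect to `δ_TV`) whose transition integrand is integrable, the transition operator
`Tu(x) = ∫_A u(h(x,a)) ‖xM_a‖ τ(da)` satisfies
`|Tu(x) − Tu(y)| ≤ (‖u‖ + 2γ(u)) δ_TV(x,y)` for `x, y ∈ K`. -/
theorem stmt_14 {S A : Type*}
    [MetricSpace S] [CompleteSpace S] [TopologicalSpace.SeparableSpace S]
    [MeasurableSpace S] [BorelSpace S]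
    [MetricSpace A] [CompleteSpace A] [TopologicalSpace.SeparableSpace A]
    [MeasurableSpace A] [BorelSpace A]
    (lam : Measure S) [SigmaFinite lam] (τ : Measure A) [SigmaFinite τ]
    (m : S → S → A → ℝ≥0)
    (hm : Measurable fun p : S × S × A => m p.1 p.2.1 p.2.2)
    (hnorm : ∀ s : S, ∫⁻ t, ∫⁻ a, (m s t a : ℝ≥0∞) ∂τ ∂lam = 1)
    (u : Measure S → ℝ) (Cu γu : ℝ) (hγu : 0 ≤ γu)
    (hbd : ∀ z : Measure S, IsProbabilityMeasure z → z ≪ lam → |u z| ≤ Cu)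
    (hlip : ∀ z₁ z₂ : Measure S, IsProbabilityMeasure z₁ → z₁ ≪ lam →
      IsProbabilityMeasure z₂ → z₂ ≪ lam → |u z₁ - u z₂| ≤ γu * tvDist z₁ z₂)
    (hint : ∀ z : Measure S, IsProbabilityMeasure z → z ≪ lam →
      Integrable (fun a => u (hmap lam m z a) * (xMa lam m z a Set.univ).toReal) τ)
    (x y : Measure S)
    (hx : IsProbabilityMeasure x) (hxl : x ≪ lam)
    (hy : IsProbabilityMeasure y) (hyl : y ≪ lam) :
    |(∫ a, u (hmap lam m x a) * (xMa lam m x a Set.univ).toReal ∂τ) -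
        ∫ a, u (hmap lam m y a) * (xMa lam m y a Set.univ).toReal ∂τ| ≤
      (Cu + 2 * γu) * tvDist x y := by
  classical
  set f := x.rnDeriv lam with hfdef
  set g := y.rnDeriv lam with hgdef
  have hfm : Measurable f := x.measurable_rnDeriv lam
  have hgm : Measurable g := y.measurable_rnDeriv lam
  have hxd : lam.withDensity f = x := Measure.withDensity_rnDeriv_eq x lam hxl
  have hyd : lam.withDensity g = y := Measure.withDensity_rnDeriv_eq y lam hyl
  have lint_univ : ∀ φ : S → ℝ≥0∞, (lam.withDensity φ) Set.univ = ∫⁻ s, φ s ∂lam := by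
    intro φ
    rw [withDensity_apply' φ Set.univ, Measure.restrict_univ]
  have hf1 : ∫⁻ s, f s ∂lam = 1 := by
    rw [← lint_univ, hxd]; exact measure_univ
  have hg1 : ∫⁻ s, g s ∂lam = 1 := by
    rw [← lint_univ, hyd]; exact measure_univ
  -- densities of xMa
  set Fa : A → S → ℝ≥0∞ := fun a t => ∫⁻ s, f s * (m s t a : ℝ≥0∞) ∂lam with hFadef
  set Ga : A → S → ℝ≥0∞ := fun a t => ∫⁻ s, g s * (m s t a : ℝ≥0∞) ∂lam with hGadef
  set Pd : A → S → ℝ≥0∞ := fun a t => ∫⁻ s, (f s - g s) * (m s t a : ℝ≥0∞) ∂lam with hPddef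
  set Qd : A → S → ℝ≥0∞ := fun a t => ∫⁻ s, (g s - f s) * (m s t a : ℝ≥0∞) ∂lam with hQddef
  have hwd : ∀ (z : Measure S) (hz : IsProbabilityMeasure z) (φ : S → ℝ≥0∞)
      (hφm : Measurable φ) (hzd : lam.withDensity φ = z) (a : A),
      xMa lam m z a = lam.withDensity (fun t => ∫⁻ s, φ s * (m s t a : ℝ≥0∞) ∂lam) := by
    intro z hz φ hφm hzd a
    rw [xMa_eq lam m hm z a]
    congr 1
    funext t
    rw [← hzd, lintegral_withDensity_eq_lintegral_mul _ hφm]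
    · rfl
    · exact measurable_coe_nnreal_ennreal.comp
        (hm.comp (measurable_id.prodMk (measurable_const.prodMk measurable_const)))
  have hxMa : ∀ a, xMa lam m x a = lam.withDensity (Fa a) := hwd x hx f hfm hxd
  have hyMa : ∀ a, xMa lam m y a = lam.withDensity (Ga a) := hwd y hy g hgm hyd
  have hxuniv : ∀ a, xMa lam m x a Set.univ = ∫⁻ t, Fa a t ∂lam := fun a => by
    rw [hxMa a, lint_univ]
  have hyuniv : ∀ a, xMa lam m y a Set.univ = ∫⁻ t, Ga a t ∂lam := fun a => by
    rw [hyMa a, lint_univ]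
  -- measurability in t (for fixed a)
  have hdmeas : ∀ (φ : S → ℝ≥0∞), Measurable φ → ∀ a : A,
      Measurable fun t => ∫⁻ s, φ s * (m s t a : ℝ≥0∞) ∂lam := by
    intro φ hφm a
    exact (dens_meas lam m hm φ hφm).comp (measurable_const.prodMk measurable_id)
  -- measurability in a of masses
  have hamesas : ∀ (φ : S → ℝ≥0∞), Measurable φ →
      Measurable fun a : A => ∫⁻ t, ∫⁻ s, φ s * (m s t a : ℝ≥0∞) ∂lam ∂lam := by
    intro φ hφm
    exact (dens_meas lam m hm φ hφm).lintegral_prod_right'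
  -- pointwise density comparisons
  have hFG : ∀ a t, Fa a t ≤ Ga a t + Pd a t := by
    intro a t
    calc Fa a t ≤ ∫⁻ s, g s * (m s t a : ℝ≥0∞) + (f s - g s) * (m s t a : ℝ≥0∞) ∂lam := by
          apply lintegral_mono
          intro s
          dsimp only
          rw [← add_mul]
          exact mul_le_mul_left le_add_tsub _
      _ = Ga a t + Pd a t := lintegral_add_left
          (hgm.mul (measurable_coe_nnreal_ennreal.comp
            (hm.comp (measurable_id.prodMk (measurable_const.prodMk measurable_const))))) _
  have hGF : ∀ a t, Ga a t ≤ Fa a t + Qd a t := by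
    intro a t
    calc Ga a t ≤ ∫⁻ s, f s * (m s t a : ℝ≥0∞) + (g s - f s) * (m s t a : ℝ≥0∞) ∂lam := by
          apply lintegral_mono
          intro s
          dsimp only
          rw [← add_mul]
          exact mul_le_mul_left le_add_tsub _
      _ = Fa a t + Qd a t := lintegral_add_left
          (hfm.mul (measurable_coe_nnreal_ennreal.comp
            (hm.comp (measurable_id.prodMk (measurable_const.prodMk measurable_const))))) _
  -- total masses via Tonelli
  have hFtot : ∫⁻ a, ∫⁻ t, Fa a t ∂lam ∂τ = 1 := by
    rw [mass_lintegral lam τ m hm hnorm f hfm, hf1]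
  have hGtot : ∫⁻ a, ∫⁻ t, Ga a t ∂lam ∂τ = 1 := by
    rw [mass_lintegral lam τ m hm hnorm g hgm, hg1]
  set Ptot := ∫⁻ s, f s - g s ∂lam with hPtotdef
  set Qtot := ∫⁻ s, g s - f s ∂lam with hQtotdef
  have hPtot' : ∫⁻ a, ∫⁻ t, Pd a t ∂lam ∂τ = Ptot :=
    mass_lintegral lam τ m hm hnorm _ (hfm.sub hgm)
  have hQtot' : ∫⁻ a, ∫⁻ t, Qd a t ∂lam ∂τ = Qtot :=
    mass_lintegral lam τ m hm hnorm _ (hgm.sub hfm)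
  have hPfin : Ptot ≠ ∞ := by
    refine ne_top_of_le_ne_top (by rw [hf1]; exact ENNReal.one_ne_top)
      (lintegral_mono fun s => tsub_le_self)
  have hQfin : Qtot ≠ ∞ := by
    refine ne_top_of_le_ne_top (by rw [hg1]; exact ENNReal.one_ne_top)
      (lintegral_mono fun s => tsub_le_self)
  -- tvDist x y
  have hT : tvDist x y = Ptot.toReal + Qtot.toReal := by
    rw [← hxd, ← hyd, tvDist_withDensity lam f g hfm hgm
      (by rw [hf1]; exact ENNReal.one_ne_top) (by rw [hg1]; exact ENNReal.one_ne_top)]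
  -- W
  set W : A → ℝ≥0∞ := fun a => (∫⁻ t, Pd a t ∂lam) + ∫⁻ t, Qd a t ∂lam with hWdef
  have hWmeas : Measurable W :=
    (hamesas _ (hfm.sub hgm)).add (hamesas _ (hgm.sub hfm))
  have hWtot : ∫⁻ a, W a ∂τ = Ptot + Qtot := by
    rw [hWdef, lintegral_add_left (hamesas (fun s => f s - g s) (hfm.sub hgm)), hPtot', hQtot']
  have hWfin : ∫⁻ a, W a ∂τ ≠ ∞ := by
    rw [hWtot]; exact ENNReal.add_ne_top.mpr ⟨hPfin, hQfin⟩
  have hCu0 : 0 ≤ Cu := le_trans (abs_nonneg _) (hbd x hx hxl)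
  have hC0 : 0 ≤ Cu + 2 * γu := by linarith
  -- integrability
  set Ix : A → ℝ := fun a => u (hmap lam m x a) * (xMa lam m x a Set.univ).toReal with hIxdef
  set Iy : A → ℝ := fun a => u (hmap lam m y a) * (xMa lam m y a Set.univ).toReal with hIydef
  have hIx : Integrable Ix τ := hint x hx hxl
  have hIy : Integrable Iy τ := hint y hy hyl
  have hWint : Integrable (fun a => (W a).toReal) τ :=
    integrable_toReal_of_lintegral_ne_top hWmeas.aemeasurable hWfin
  -- the pointwise (a.e.) bound
  have key : ∀ᵐ a ∂τ, |Ix a - Iy a| ≤ (Cu + 2 * γu) * (W a).toReal := by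
    have hαfin : ∀ᵐ a ∂τ, (∫⁻ t, Fa a t ∂lam) < ∞ := by
      apply ae_lt_top (hamesas f hfm)
      rw [hFtot]; exact ENNReal.one_ne_top
    have hβfin : ∀ᵐ a ∂τ, (∫⁻ t, Ga a t ∂lam) < ∞ := by
      apply ae_lt_top (hamesas g hgm)
      rw [hGtot]; exact ENNReal.one_ne_top
    have hWafin : ∀ᵐ a ∂τ, W a < ∞ := ae_lt_top hWmeas hWfin
    filter_upwards [hαfin, hβfin, hWafin] with a hα hβ hWa
    set α := ∫⁻ t, Fa a t ∂lam with hαdef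
    set β := ∫⁻ t, Ga a t ∂lam with hβdef
    have hPafin : (∫⁻ t, Pd a t ∂lam) ≠ ∞ := by
      intro h; rw [hWdef] at hWa; simp [h] at hWa
    have hQafin : (∫⁻ t, Qd a t ∂lam) ≠ ∞ := by
      intro h; rw [hWdef] at hWa; simp [h] at hWa
    have hαβ : α ≤ β + ∫⁻ t, Pd a t ∂lam := by
      calc α ≤ ∫⁻ t, Ga a t + Pd a t ∂lam := lintegral_mono (hFG a)
        _ = _ := lintegral_add_left (hdmeas g hgm a) _
    have hβα : β ≤ α + ∫⁻ t, Qd a t ∂lam := by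
      calc β ≤ ∫⁻ t, Fa a t + Qd a t ∂lam := lintegral_mono (hGF a)
        _ = _ := lintegral_add_left (hdmeas f hfm a) _
    have hWtr : (W a).toReal = (∫⁻ t, Pd a t ∂lam).toReal + (∫⁻ t, Qd a t ∂lam).toReal :=
      ENNReal.toReal_add hPafin hQafin
    have hWtr0 : 0 ≤ (W a).toReal := ENNReal.toReal_nonneg
    -- mass difference bound
    have hmassd : |α.toReal - β.toReal| ≤ (W a).toReal := by
      rw [abs_sub_le_iff]
      constructor
      · have h1 := ENNReal.toReal_mono
          (ENNReal.add_ne_top.mpr ⟨hβ.ne, hPafin⟩) hαβ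
        rw [ENNReal.toReal_add hβ.ne hPafin] at h1
        rw [hWtr]
        have := ENNReal.toReal_nonneg (a := ∫⁻ t, Qd a t ∂lam)
        linarith
      · have h1 := ENNReal.toReal_mono
          (ENNReal.add_ne_top.mpr ⟨hα.ne, hQafin⟩) hβα
        rw [ENNReal.toReal_add hα.ne hQafin] at h1
        rw [hWtr]
        have := ENNReal.toReal_nonneg (a := ∫⁻ t, Pd a t ∂lam)
        linarith
    rw [hIxdef, hIydef]
    simp only
    rw [hxuniv a, hyuniv a, ← hαdef, ← hβdef]
    by_cases hα0 : α = 0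
    · by_cases hβ0 : β = 0
      · simp only [hα0, hβ0, ENNReal.toReal_zero, mul_zero, sub_zero, abs_zero]
        exact mul_nonneg hC0 hWtr0
      · -- α = 0, β ≠ 0
        have hyprob : IsProbabilityMeasure (hmap lam m y a) := by
          rw [hmap, if_pos (by rw [hyuniv a, ← hβdef]; exact pos_iff_ne_zero.mpr hβ0)]
          constructor
          rw [Measure.smul_apply, smul_eq_mul, hyuniv a, ← hβdef]
          exact ENNReal.inv_mul_cancel hβ0 hβ.ne
        have hyac : hmap lam m y a ≪ lam := by
          rw [hmap]
          split_ifs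
          · exact Measure.AbsolutelyContinuous.smul_left
              (by rw [hyMa a]; exact withDensity_absolutelyContinuous lam _) _
          · exact hyl
        have hbdy := hbd _ hyprob hyac
        have hβW : β.toReal ≤ (W a).toReal := by
          have : β ≤ W a := by
            refine le_trans hβα ?_
            rw [hα0, zero_add, hWdef]
            exact le_add_self
          exact ENNReal.toReal_mono hWa.ne this
        calc |u (hmap lam m x a) * α.toReal - u (hmap lam m y a) * β.toReal|
            = |u (hmap lam m y a)| * β.toReal := by
              rw [hα0]; simp [abs_mul, abs_of_nonneg ENNReal.toReal_nonneg]
          _ ≤ Cu * (W a).toReal := by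
              apply mul_le_mul hbdy hβW ENNReal.toReal_nonneg hCu0
          _ ≤ (Cu + 2 * γu) * (W a).toReal := by nlinarith
    · have hxprob : IsProbabilityMeasure (hmap lam m x a) := by
        rw [hmap, if_pos (by rw [hxuniv a, ← hαdef]; exact pos_iff_ne_zero.mpr hα0)]
        constructor
        rw [Measure.smul_apply, smul_eq_mul, hxuniv a, ← hαdef]
        exact ENNReal.inv_mul_cancel hα0 hα.ne
      have hxac : hmap lam m x a ≪ lam := by
        rw [hmap]
        split_ifs
        · exact Measure.AbsolutelyContinuous.smul_left
            (by rw [hxMa a]; exact withDensity_absolutelyContinuous lam _) _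
        · exact hxl
      have hbdx := hbd _ hxprob hxac
      by_cases hβ0 : β = 0
      · -- β = 0, α ≠ 0
        have hαW : α.toReal ≤ (W a).toReal := by
          have : α ≤ W a := by
            refine le_trans hαβ ?_
            rw [hβ0, zero_add, hWdef]
            exact le_self_add
          exact ENNReal.toReal_mono hWa.ne this
        calc |u (hmap lam m x a) * α.toReal - u (hmap lam m y a) * β.toReal|
            = |u (hmap lam m x a)| * α.toReal := by
              rw [hβ0]; simp [abs_mul, abs_of_nonneg ENNReal.toReal_nonneg]
          _ ≤ Cu * (W a).toReal := by
              apply mul_le_mul hbdx hαW ENNReal.toReal_nonneg hCu0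
          _ ≤ (Cu + 2 * γu) * (W a).toReal := by nlinarith
      · -- main case: both positive
        have hyprob : IsProbabilityMeasure (hmap lam m y a) := by
          rw [hmap, if_pos (by rw [hyuniv a, ← hβdef]; exact pos_iff_ne_zero.mpr hβ0)]
          constructor
          rw [Measure.smul_apply, smul_eq_mul, hyuniv a, ← hβdef]
          exact ENNReal.inv_mul_cancel hβ0 hβ.ne
        have hyac : hmap lam m y a ≪ lam := by
          rw [hmap]
          split_ifs
          · exact Measure.AbsolutelyContinuous.smul_left
              (by rw [hyMa a]; exact withDensity_absolutelyContinuous lam _) _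
          · exact hyl
        have hbdy := hbd _ hyprob hyac
        -- tvDist of normalized measures
        have hxh : hmap lam m x a = lam.withDensity (fun t => α⁻¹ * Fa a t) := by
          rw [hmap, if_pos (by rw [hxuniv a, ← hαdef]; exact pos_iff_ne_zero.mpr hα0),
            hxuniv a, ← hαdef, hxMa a]
          rw [← withDensity_smul _ (hdmeas f hfm a)]
          rfl
        have hyh : hmap lam m y a = lam.withDensity (fun t => β⁻¹ * Ga a t) := by
          rw [hmap, if_pos (by rw [hyuniv a, ← hβdef]; exact pos_iff_ne_zero.mpr hβ0),
            hyuniv a, ← hβdef, hyMa a]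
          rw [← withDensity_smul _ (hdmeas g hgm a)]
          rfl
        have hnf : ∫⁻ t, α⁻¹ * Fa a t ∂lam = 1 := by
          rw [lintegral_const_mul _ (hdmeas f hfm a), ← hαdef]
          exact ENNReal.inv_mul_cancel hα0 hα.ne
        have hng : ∫⁻ t, β⁻¹ * Ga a t ∂lam = 1 := by
          rw [lintegral_const_mul _ (hdmeas g hgm a), ← hβdef]
          exact ENNReal.inv_mul_cancel hβ0 hβ.ne
        have htv : tvDist (hmap lam m x a) (hmap lam m y a) =
            (∫⁻ t, α⁻¹ * Fa a t - β⁻¹ * Ga a t ∂lam).toReal +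
              (∫⁻ t, β⁻¹ * Ga a t - α⁻¹ * Fa a t ∂lam).toReal := by
          rw [hxh, hyh]
          exact tvDist_withDensity lam _ _ ((hdmeas f hfm a).const_mul _)
            ((hdmeas g hgm a).const_mul _)
            (by rw [hnf]; exact ENNReal.one_ne_top)
            (by rw [hng]; exact ENNReal.one_ne_top)
        -- the ENNReal bound
        have hENN := norm_tv_bound lam (Fa a) (Ga a) (Pd a) (Qd a)
          (hdmeas f hfm a) (hdmeas g hgm a) (hFG a) (hGF a) hα0 hα.ne hβ0 hβ.ne
        have he1fin : (∫⁻ t, α⁻¹ * Fa a t - β⁻¹ * Ga a t ∂lam) ≠ ∞ := by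
          refine ne_top_of_le_ne_top (by rw [hnf]; exact ENNReal.one_ne_top)
            (lintegral_mono fun t => tsub_le_self)
        have he2fin : (∫⁻ t, β⁻¹ * Ga a t - α⁻¹ * Fa a t ∂lam) ≠ ∞ := by
          refine ne_top_of_le_ne_top (by rw [hng]; exact ENNReal.one_ne_top)
            (lintegral_mono fun t => tsub_le_self)
        have htvbd : β.toReal * tvDist (hmap lam m x a) (hmap lam m y a) ≤
            2 * (W a).toReal := by
          rw [htv, ← ENNReal.toReal_add he1fin he2fin, ← ENNReal.toReal_mul]
          have h2W : (2 : ℝ) * (W a).toReal = ((2 * W a : ℝ≥0∞)).toReal := by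
            rw [ENNReal.toReal_mul]; norm_num
          rw [h2W]
          exact ENNReal.toReal_mono (ENNReal.mul_ne_top ENNReal.ofNat_ne_top hWa.ne) hENN
        -- assemble
        have htri : |u (hmap lam m x a) * α.toReal - u (hmap lam m y a) * β.toReal| ≤
            |u (hmap lam m x a)| * |α.toReal - β.toReal| +
              |u (hmap lam m x a) - u (hmap lam m y a)| * β.toReal := by
          have : u (hmap lam m x a) * α.toReal - u (hmap lam m y a) * β.toReal =
              u (hmap lam m x a) * (α.toReal - β.toReal) +
                (u (hmap lam m x a) - u (hmap lam m y a)) * β.toReal := by ring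
          rw [this]
          refine le_trans (abs_add_le _ _) ?_
          rw [abs_mul, abs_mul, abs_of_nonneg (ENNReal.toReal_nonneg (a := β))]
        refine le_trans htri ?_
        have hlipb := hlip _ _ hxprob hxac hyprob hyac
        have t1 : |u (hmap lam m x a)| * |α.toReal - β.toReal| ≤ Cu * (W a).toReal :=
          mul_le_mul hbdx hmassd (abs_nonneg _) hCu0
        have t2 : |u (hmap lam m x a) - u (hmap lam m y a)| * β.toReal ≤
            γu * (2 * (W a).toReal) := by
          calc |u (hmap lam m x a) - u (hmap lam m y a)| * β.toReal ≤
              (γu * tvDist (hmap lam m x a) (hmap lam m y a)) * β.toReal :=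
                mul_le_mul_of_nonneg_right hlipb ENNReal.toReal_nonneg
            _ = γu * (β.toReal * tvDist (hmap lam m x a) (hmap lam m y a)) := by ring
            _ ≤ γu * (2 * (W a).toReal) := mul_le_mul_of_nonneg_left htvbd hγu
        calc _ ≤ Cu * (W a).toReal + γu * (2 * (W a).toReal) := add_le_add t1 t2
          _ = (Cu + 2 * γu) * (W a).toReal := by ring
  -- finish
  have step1 : |(∫ a, Ix a ∂τ) - ∫ a, Iy a ∂τ| ≤ ∫ a, |Ix a - Iy a| ∂τ := by
    rw [← integral_sub hIx hIy]
    simpa [Real.norm_eq_abs] using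
      norm_integral_le_integral_norm (μ := τ) (fun a => Ix a - Iy a)
  have step2 : ∫ a, |Ix a - Iy a| ∂τ ≤ ∫ a, (Cu + 2 * γu) * (W a).toReal ∂τ :=
    integral_mono_ae (hIx.sub hIy).abs (hWint.const_mul _) key
  have step3 : ∫ a, (Cu + 2 * γu) * (W a).toReal ∂τ = (Cu + 2 * γu) * tvDist x y := by
    rw [integral_const_mul, integral_toReal hWmeas.aemeasurable (ae_lt_top hWmeas hWfin),
      hWtot, hT, ENNReal.toReal_add hPfin hQfin]
  calc |(∫ a, Ix a ∂τ) - ∫ a, Iy a ∂τ| ≤ ∫ a, |Ix a - Iy a| ∂τ := step1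
    _ ≤ ∫ a, (Cu + 2 * γu) * (W a).toReal ∂τ := step2
    _ = (Cu + 2 * γu) * tvDist x y := step3
end
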